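/- arXiv:math/0401375 — 7 statements merged into one kernel-verified Lean document; each statement's English description precedes it below -/
import Mathlib

section
/- Let α, β, i be positive integers with α < β. Then α^{<i>} < β^{<i>}. -/
open scoped BigOperators

/-- The largest `m` with `C(m, i) ≤ α` (for `i ≥ 1`, `α ≥ 1` this is the leading
exponent of the `i`-binomial development of `α`). -/
noncomputable def lead (α i : ℕ) : ℕ := sSup {m : ℕ | Nat.choose m i ≤ α}

/-- `binUp i α = α^{<i>}`, defined through the `i`-binomial development of `α`:
if `α = C(m_i, i) + C(m_{i-1}, i-1) + ⋯ + C(m_j, j)` with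
`m_i > m_{i-1} > ⋯ > m_j ≥ j ≥ 1`, then
`binUp i α = C(m_i+1, i+1) + C(m_{i-1}+1, i) + ⋯ + C(m_j+1, j+1)`, and `binUp i 0 = 0`. -/
noncomputable def binUp : ℕ → ℕ → ℕ
  | 0, _ => 0
  | (i+1), α =>
    if α = 0 then 0
    else Nat.choose (lead α (i+1) + 1) (i+2) +
      binUp i (α - Nat.choose (lead α (i+1)) (i+1))

/-- `h : ℕ → ℕ` is a Macaulay function if `h 0 = 1` and `h (i+1) ≤ (h i)^{<i>}`
for every `i ≥ 1`. -/
def MacaulayFun (h : ℕ → ℕ) : Prop :=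
  h 0 = 1 ∧ ∀ i, 1 ≤ i → h (i+1) ≤ binUp i (h i)

/-- `s₀(h) = inf {n | h n < C(a+n-1, n)} ∈ ℕ ∪ {∞}` for a Macaulay function of
type `a = h 1`. -/
noncomputable def s0M (h : ℕ → ℕ) : ℕ∞ :=
  sInf {x : ℕ∞ | ∃ n : ℕ, x = (n : ℕ∞) ∧ h n < Nat.choose (h 1 + n - 1) n}

/-- `sup f = max {n | f n ≠ 0}` for a finitely supported `f : ℕ → ℕ`. -/
noncomputable def supN (f : ℕ → ℕ) : ℕ := sSup {n : ℕ | f n ≠ 0}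

/-- A character: a finitely supported `γ : ℤ → ℤ` with `∑ γ(n) = 0`. -/
def IsChar (γ : ℤ → ℤ) : Prop :=
  (Function.support γ).Finite ∧ ∑ᶠ n, γ n = 0

/-- `s₀(γ) = inf {n ≥ 0 | γ n ≠ -1}`. -/
noncomputable def s0C (γ : ℤ → ℤ) : ℤ := sInf {n : ℤ | 0 ≤ n ∧ γ n ≠ -1}

/-- A positive character: `γ(n) = 0` for `n < 0`, `γ(0) = -1` and `γ(n) ≥ 0`
for every `n ≥ s₀(γ)`. -/
def PosChar (γ : ℤ → ℤ) : Prop :=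
  IsChar γ ∧ (∀ n < 0, γ n = 0) ∧ γ 0 = -1 ∧ ∀ n : ℤ, s0C γ ≤ n → 0 ≤ γ n

/-- `sup γ = max {n | γ n ≠ 0}` for a finitely supported `γ : ℤ → ℤ`. -/
noncomputable def supZ (γ : ℤ → ℤ) : ℤ := sSup {n : ℤ | γ n ≠ 0}

/-- `IsDev α i j m` says that `α = C(m_i, i) + C(m_{i-1}, i-1) + ⋯ + C(m_j, j)`
with `m_i > m_{i-1} > ⋯ > m_j ≥ j ≥ 1` is the `i`-binomial development of `α`. -/
def IsDev (α i j : ℕ) (m : ℕ → ℕ) : Prop :=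
  1 ≤ j ∧ j ≤ i ∧ j ≤ m j ∧ (∀ k, j ≤ k → k < i → m k < m (k+1)) ∧
    α = ∑ k ∈ Finset.Icc j i, Nat.choose (m k) k
lemma choose_lt_choose_succ {m i : ℕ} (hi : 1 ≤ i) (him : i ≤ m) :
    Nat.choose m i < Nat.choose (m+1) i := by
  obtain ⟨k, rfl⟩ : ∃ k, i = k + 1 := ⟨i - 1, by omega⟩
  rw [Nat.choose_succ_succ']
  have : 0 < Nat.choose m k := Nat.choose_pos (by omega)
  omega

lemma add_le_choose_add {i : ℕ} (hi : 1 ≤ i) : ∀ m, i ≤ m → m + 1 ≤ Nat.choose m i + i := by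
  intro m
  induction m with
  | zero => intro h; omega
  | succ n ih =>
    intro h
    rcases Nat.lt_or_ge n i with h'|h'
    · have : i = n + 1 := by omega
      subst this; simp [Nat.choose_self]
    · have h1 := ih h'
      have h2 := choose_lt_choose_succ hi h'
      omega

lemma bddAbove_leadSet {α i : ℕ} (hi : 1 ≤ i) : BddAbove {m : ℕ | Nat.choose m i ≤ α} := by
  refine ⟨α + i, fun m hm => ?_⟩
  rcases Nat.lt_or_ge m i with h|h
  · omega
  · have := add_le_choose_add hi m h
    simp only [Set.mem_setOf_eq] at hm
    omega

lemma choose_lead_le {α i : ℕ} (hα : 1 ≤ α) (hi : 1 ≤ i) : Nat.choose (lead α i) i ≤ α := by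
  have hne : {m : ℕ | Nat.choose m i ≤ α}.Nonempty := ⟨i, by simp [Nat.choose_self]; omega⟩
  exact Nat.sSup_mem hne (bddAbove_leadSet hi)

lemma le_lead {α i : ℕ} (hα : 1 ≤ α) (hi : 1 ≤ i) : i ≤ lead α i :=
  le_csSup (bddAbove_leadSet hi) (by simp [Nat.choose_self]; omega)

lemma lt_choose_lead_succ {α i : ℕ} (hα : 1 ≤ α) (hi : 1 ≤ i) :
    α < Nat.choose (lead α i + 1) i := by
  by_contra h
  push_neg at h
  have : lead α i + 1 ≤ lead α i := le_csSup (bddAbove_leadSet hi) h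
  omega

lemma lead_eq {α i m : ℕ} (hi : 1 ≤ i) (him : i ≤ m) (h1 : Nat.choose m i ≤ α)
    (h2 : α < Nat.choose (m+1) i) : lead α i = m := by
  have hα : 1 ≤ α := le_trans (Nat.choose_pos him) h1
  have hle : lead α i ≤ m := by
    by_contra h
    push_neg at h
    have h3 := Nat.choose_le_choose i (by omega : m + 1 ≤ lead α i)
    have := choose_lead_le hα hi
    omega
  have h4 : m ≤ lead α i := le_csSup (bddAbove_leadSet hi) h1
  omega

lemma binUp_zero (i : ℕ) : binUp i 0 = 0 := by cases i <;> simp [binUp]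

lemma binUp_pos {i α : ℕ} (hi : 1 ≤ i) (hα : 1 ≤ α) : 0 < binUp i α := by
  obtain ⟨j, rfl⟩ : ∃ j, i = j + 1 := ⟨i - 1, by omega⟩
  rw [binUp]
  have h1 : j + 1 ≤ lead α (j + 1) := le_lead hα hi
  have : 0 < Nat.choose (lead α (j+1) + 1) (j + 2) :=
    Nat.choose_pos (by omega)
  simp only [if_neg (by omega : ¬ α = 0)]
  omega

lemma binUp_lt_choose : ∀ i L α : ℕ, i ≤ L → α < Nat.choose L i →
    binUp i α < Nat.choose (L+1) (i+1) := by
  intro i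
  induction i with
  | zero =>
    intro L α _ hα
    simp [Nat.choose_zero_right] at hα
    have : α = 0 := by omega
    subst this
    rw [binUp_zero]
    simp [Nat.choose_one_right]
  | succ i ih =>
    intro L α hiL hα
    rcases Nat.eq_zero_or_pos α with rfl|hα1
    · rw [binUp_zero]; exact Nat.choose_pos (by omega)
    set m := lead α (i+1) with hm
    have hi1 : 1 ≤ i + 1 := by omega
    have hmge : i + 1 ≤ m := le_lead hα1 hi1
    have hle : Nat.choose m (i+1) ≤ α := choose_lead_le hα1 hi1
    have hlt : α < Nat.choose (m+1) (i+1) := lt_choose_lead_succ hα1 hi1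
    have hmL : m < L := by
      by_contra h
      push_neg at h
      have := Nat.choose_le_choose (i+1) h
      omega
    have hdiff : α - Nat.choose m (i+1) < Nat.choose m i := by
      have hpascal : Nat.choose (m+1) (i+1) = Nat.choose m i + Nat.choose m (i+1) :=
        Nat.choose_succ_succ m i
      omega
    have hIH := ih m (α - Nat.choose m (i+1)) (by omega) hdiff
    rw [binUp, if_neg (by omega : ¬ α = 0), ← hm]
    have e1 : i + 1 + 1 = i + 2 := rfl
    have e2 : m + 1 + 1 = m + 2 := rfl
    rw [e1]
    have hpascal2 : Nat.choose (m+2) (i+2) = Nat.choose (m+1) (i+1) + Nat.choose (m+1) (i+2) :=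
      Nat.choose_succ_succ (m+1) (i+1)
    have hmono : Nat.choose (m+2) (i+2) ≤ Nat.choose (L+1) (i+2) :=
      Nat.choose_le_choose (i+2) (by omega)
    omega

lemma binUp_succ_lt : ∀ i, 1 ≤ i → ∀ α, 1 ≤ α → binUp i α < binUp i (α + 1) := by
  intro i
  induction i with
  | zero => omega
  | succ i ih =>
    intro _ α hα
    set m := lead α (i+1) with hm
    have hi1 : 1 ≤ i + 1 := by omega
    have hmge : i + 1 ≤ m := le_lead hα hi1
    have hle : Nat.choose m (i+1) ≤ α := choose_lead_le hα hi1
    have hlt : α < Nat.choose (m+1) (i+1) := lt_choose_lead_succ hα hi1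
    rcases Nat.lt_or_ge (α + 1) (Nat.choose (m+1) (i+1)) with hB|hA
    · -- Case B : lead (α+1) = m
      have hlead' : lead (α+1) (i+1) = m := lead_eq hi1 hmge (by omega) hB
      rw [binUp, binUp, if_neg (by omega : ¬ α = 0), if_neg (by omega : ¬ α + 1 = 0),
        hlead', ← hm]
      have hstep : binUp i (α - Nat.choose m (i+1)) < binUp i (α + 1 - Nat.choose m (i+1)) := by
        have hi0 : 1 ≤ i := by
          by_contra h
          push_neg at h
          interval_cases i
          · simp [Nat.choose_one_right] at hB hlt hle
            omega
        rcases Nat.eq_or_lt_of_le hle with heq|hlt2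
        · rw [show α + 1 - Nat.choose m (i+1) = 1 by omega,
            show α - Nat.choose m (i+1) = 0 by omega, binUp_zero]
          exact binUp_pos hi0 le_rfl
        · have h1 : 1 ≤ α - Nat.choose m (i+1) := by omega
          have := ih hi0 (α - Nat.choose m (i+1)) h1
          rw [show α + 1 - Nat.choose m (i+1) = (α - Nat.choose m (i+1)) + 1 by omega]
          exact this
      omega
    · -- Case A : α + 1 = choose (m+1) (i+1)
      have heq : α + 1 = Nat.choose (m+1) (i+1) := by omega
      have hlead' : lead (α+1) (i+1) = m + 1 :=
        lead_eq hi1 (by omega) (by omega) (by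
          have := choose_lt_choose_succ hi1 (by omega : i + 1 ≤ m + 1)
          omega)
      rw [binUp, binUp, if_neg (by omega : ¬ α = 0), if_neg (by omega : ¬ α + 1 = 0),
        hlead', ← hm]
      rw [show α + 1 - Nat.choose (m+1) (i+1) = 0 by omega, binUp_zero]
      have e1 : i + 1 + 1 = i + 2 := rfl
      have e2 : m + 1 + 1 = m + 2 := rfl
      rw [e1, e2]
      have hdiff : α - Nat.choose m (i+1) < Nat.choose m i := by
        have hpascal : Nat.choose (m+1) (i+1) = Nat.choose m i + Nat.choose m (i+1) :=
          Nat.choose_succ_succ m i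
        omega
      have hB := binUp_lt_choose i m (α - Nat.choose m (i+1)) (by omega) hdiff
      have hpascal2 : Nat.choose (m+2) (i+2) = Nat.choose (m+1) (i+1) + Nat.choose (m+1) (i+2) :=
        Nat.choose_succ_succ (m+1) (i+1)
      omega

/-- Prop. 2.11 a: if `0 < α < β` then `α^{<i>} < β^{<i>}`. -/
theorem binUp_strictMono (α β i : ℕ) (hα : 0 < α) (hβ : 0 < β) (hi : 0 < i)
    (hαβ : α < β) : binUp i α < binUp i β := by
  induction β with
  | zero => omega
  | succ b ih =>
    rcases Nat.lt_or_ge α b with h|h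
    · have := ih (by omega) h
      have := binUp_succ_lt i hi b (by omega)
      omega
    · have : α = b := by omega
      subst this
      exact binUp_succ_lt i hi α hα
end

section
/- Let h be a Macaulay function. If there exists n > 1 with h(n) < n + 1, then h is non-increasing from n on, i.e. h(m+1) ≤ h(m) for all m ≥ n. -/
open scoped BigOperators

lemma lead_eq_of_le_succ {α i : ℕ} (h1 : 1 ≤ α) (h2 : α ≤ i + 1) :
    lead α (i+1) = i + 1 := by
  have hset : {m : ℕ | Nat.choose m (i+1) ≤ α} = Set.Iic (i+1) := by
    ext m
    simp only [Set.mem_setOf_eq, Set.mem_Iic]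
    constructor
    · intro hm
      by_contra hc
      push_neg at hc
      have : Nat.choose (i+2) (i+1) ≤ Nat.choose m (i+1) := Nat.choose_le_choose _ hc
      have h3 : Nat.choose (i+2) (i+1) = i + 2 := Nat.choose_succ_self_right _
      omega
    · intro hm
      rcases Nat.lt_or_ge m (i+1) with hl | hg
      · rw [Nat.choose_eq_zero_of_lt hl]; omega
      · have : m = i + 1 := le_antisymm hm hg
        rw [this, Nat.choose_self]; omega
  rw [lead, hset, csSup_Iic]

lemma binUp_of_le : ∀ i α : ℕ, α ≤ i → binUp i α = α := by
  intro i
  induction i with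
  | zero => intro α hα; interval_cases α; rfl
  | succ i ih =>
    intro α hα
    rcases Nat.eq_zero_or_pos α with h0 | h1
    · simp [binUp, h0]
    · rw [binUp, if_neg (by omega), lead_eq_of_le_succ h1 hα, Nat.choose_self,
        Nat.choose_self, ih (α - 1) (by omega)]
      omega
/-- Prop. 2.11 e: if `h(n) < n + 1` at some `n > 1`, then the
Macaulay function `h` is non-increasing from `n` on. -/
theorem macaulay_antitone_of_lt (h : ℕ → ℕ) (hM : MacaulayFun h)
    (n : ℕ) (hn : 1 < n) (hlt : h n < n + 1) :
    ∀ m, n ≤ m → h (m + 1) ≤ h m := by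
  have key : ∀ m, n ≤ m → h m ≤ m := by
    intro m hm
    induction m with
    | zero => omega
    | succ m ih =>
      rcases Nat.lt_or_ge m n with hl | hg
      · have h2 : n = m + 1 := by omega
        have : h (m + 1) = h n := by rw [h2]
        omega
      · have hb := hM.2 m (by omega)
        rw [binUp_of_le m (h m) (ih hg)] at hb
        omega
  intro m hm
  have hb := hM.2 m (by omega)
  rwa [binUp_of_le m (h m) (key m hm)] at hb
end

section
/- Let h : ℕ → ℕ satisfy h(0) = 1 and h(1) = 2, and set s_0 = inf{n : h(n) < n+1} ∈ ℕ ∪ {∞} (so h(n) = n+1 for all n < s_0). Then h is a Macaulay function of type 2 if and only if h is non-increasing on [s_0, ∞), i.e. h(m+1) ≤ h(m) for all m ≥ s_0. In that case s_0 = s_0(h). -/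
open scoped BigOperators

lemma lead_set_eq (i α b : ℕ) (h1 : Nat.choose b (i+1) ≤ α)
    (h2 : α < Nat.choose (b+1) (i+1)) :
    {m : ℕ | Nat.choose m (i+1) ≤ α} = Set.Iic b := by
  ext m
  simp only [Set.mem_setOf_eq, Set.mem_Iic]
  constructor
  · intro hm
    by_contra hc
    push_neg at hc
    have hx : Nat.choose (b+1) (i+1) ≤ Nat.choose m (i+1) := Nat.choose_le_choose (i+1) hc
    omega
  · intro hm
    exact le_trans (Nat.choose_le_choose (i+1) hm) h1

lemma lead_small (i α : ℕ) (h1 : 1 ≤ α) (h2 : α ≤ i + 1) : lead α (i+1) = i + 1 := by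
  rw [lead, lead_set_eq i α (i+1) (by simpa [Nat.choose_self] using h1)
    (by rw [Nat.choose_succ_self_right]; omega), csSup_Iic]

lemma binUp_small : ∀ i α, α ≤ i → binUp i α = α := by
  intro i
  induction i with
  | zero => intro α hα; interval_cases α; simp [binUp]
  | succ k ih =>
    intro α hα
    rcases Nat.eq_zero_or_pos α with rfl | hpos
    · simp [binUp]
    · rw [binUp, if_neg (by omega), lead_small k α hpos hα, Nat.choose_self,
        Nat.choose_self, ih (α - 1) (by omega)]
      omega

lemma lead_succ (i : ℕ) : lead (i+2) (i+1) = i + 2 := by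
  have hlt : i + 2 < Nat.choose (i+3) (i+1) := by
    have h1 : Nat.choose (i+2) (i+1) ≤ Nat.choose (i+3) (i+1) :=
      Nat.choose_le_choose (i+1) (by omega)
    have h2 : Nat.choose (i+3) (i+1) = Nat.choose (i+2) i + Nat.choose (i+2) (i+1) :=
      Nat.choose_succ_succ (i+2) i
    have h3 : 0 < Nat.choose (i+2) i := Nat.choose_pos (by omega)
    rw [Nat.choose_succ_self_right] at h2
    omega
  rw [lead, lead_set_eq i (i+2) (i+2) (by rw [Nat.choose_succ_self_right]) hlt,
    csSup_Iic]

lemma binUp_diag (i : ℕ) : binUp (i+1) (i+2) = i + 3 := by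
  rw [binUp, if_neg (by omega), lead_succ, Nat.choose_succ_self_right,
    Nat.choose_succ_self_right]
  simp [binUp_zero]
/-- Prop. 2.16, type 2: let `h 0 = 1`, `h 1 = 2`,
`S = inf {n | h n < n + 1} ∈ ℕ∞` and suppose `h n = n + 1` for `n < S`. Then
`h` is a Macaulay function of type 2 iff `h` is non-increasing on `[S, ∞)`;
and in that case `S = s₀(h)`. -/
theorem macaulay_type_two_iff (h : ℕ → ℕ) (h0 : h 0 = 1) (h1 : h 1 = 2)
    (S : ℕ∞) (hS : S = sInf {x : ℕ∞ | ∃ n : ℕ, x = (n : ℕ∞) ∧ h n < n + 1})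
    (hbelow : ∀ n : ℕ, (n : ℕ∞) < S → h n = n + 1) :
    ((MacaulayFun h ∧ h 1 = 2) ↔
      ∀ m : ℕ, S ≤ (m : ℕ∞) → h (m + 1) ≤ h m) ∧
    (MacaulayFun h → S = s0M h) := by
  -- the two inf-defining sets coincide since h 1 = 2
  have hsets : {x : ℕ∞ | ∃ n : ℕ, x = (n : ℕ∞) ∧ h n < n + 1} =
      {x : ℕ∞ | ∃ n : ℕ, x = (n : ℕ∞) ∧ h n < Nat.choose (h 1 + n - 1) n} := by
    ext x
    have key : ∀ n : ℕ, Nat.choose (h 1 + n - 1) n = n + 1 := by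
      intro n
      rw [h1, show 2 + n - 1 = n + 1 by omega, Nat.choose_succ_self_right]
    simp only [Set.mem_setOf_eq, key]
  have hpart2 : S = s0M h := by rw [hS, s0M, hsets]
  refine ⟨?_, fun _ => hpart2⟩
  by_cases hne : ∃ n, h n < n + 1
  · -- there is a first drop n0; S = n0
    set n0 := Nat.find hne with hn0def
    have hn0 : h n0 < n0 + 1 := Nat.find_spec hne
    have hn0pos : 1 ≤ n0 := by
      rcases Nat.eq_zero_or_pos n0 with hz | hp
      · rw [hz] at hn0; omega
      · exact hp
    have hSn0 : S = (n0 : ℕ∞) := by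
      apply le_antisymm
      · rw [hS]; exact sInf_le ⟨n0, rfl, hn0⟩
      · rw [hS]; apply le_sInf
        rintro x ⟨n, rfl, hn⟩
        exact_mod_cast Nat.cast_le.mpr (Nat.find_min' hne hn)
    have hbelow' : ∀ k, k < n0 → h k = k + 1 := by
      intro k hk
      exact hbelow k (by rw [hSn0]; exact_mod_cast hk)
    constructor
    · rintro ⟨⟨_, hmac⟩, _⟩ m hm
      rw [hSn0, Nat.cast_le] at hm
      -- once below the diagonal, h stays ≤ m
      have hle : ∀ m, n0 ≤ m → h m ≤ m := by
        intro m hm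
        induction m with
        | zero => omega
        | succ k ih =>
          rcases Nat.lt_or_ge k n0 with hk | hk
          · have : n0 = k + 1 := by omega
            rw [← this]; omega
          · have hk1 : 1 ≤ k := le_trans hn0pos hk
            calc h (k+1) ≤ binUp k (h k) := hmac k hk1
              _ = h k := binUp_small k (h k) (ih hk)
              _ ≤ k + 1 := by omega
      have hhm : h m ≤ m := hle m hm
      calc h (m+1) ≤ binUp m (h m) := hmac m (le_trans hn0pos hm)
        _ = h m := binUp_small m (h m) hhm
    · intro hdec
      refine ⟨⟨h0, ?_⟩, h1⟩
      intro i hi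
      have hdec' : ∀ m, n0 ≤ m → h (m+1) ≤ h m := by
        intro m hm
        exact hdec m (by rw [hSn0]; exact_mod_cast hm)
      rcases Nat.lt_or_ge i n0 with hlt | hge
      · -- h i = i + 1, binUp i (i+1) = i+2
        obtain ⟨j, rfl⟩ : ∃ j, i = j + 1 := ⟨i - 1, by omega⟩
        rw [hbelow' (j+1) hlt, binUp_diag]
        rcases Nat.lt_or_ge (j+1+1) n0 with hlt2 | hge2
        · rw [hbelow' (j+1+1) hlt2]
        · have heq : j + 1 + 1 = n0 := by omega
          rw [heq]
          omega
      · -- h is ≤ h n0 ≤ n0 ≤ i from n0 on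
        have hchain : ∀ m, n0 ≤ m → h m ≤ h n0 := by
          intro m hm
          induction m with
          | zero => omega
          | succ k ih =>
            rcases Nat.lt_or_ge k n0 with hk | hk
            · have : n0 = k + 1 := by omega
              rw [this]
            · exact le_trans (hdec' k hk) (ih hk)
        have hii : h i ≤ i := by
          have := hchain i hge
          omega
        rw [binUp_small i (h i) hii]
        exact hdec' i hge
  · -- no drop: h n = n + 1 everywhere, S = ⊤
    push_neg at hne
    have hST : S = ⊤ := by
      rw [hS]
      have hE : sInf (∅ : Set ℕ∞) = ⊤ := sInf_empty
      convert hE using 2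
      ext x
      simp only [Set.mem_setOf_eq, Set.mem_empty_iff_false, iff_false, not_exists]
      rintro n ⟨rfl, hn⟩
      exact absurd hn (by have := hne n; omega)
    have hall : ∀ n : ℕ, h n = n + 1 := fun n =>
      hbelow n (by rw [hST]; exact_mod_cast lt_of_le_of_ne le_top (ENat.coe_ne_top n))
    constructor
    · rintro - m hm
      rw [hST] at hm
      exact absurd (lt_of_le_of_lt hm (lt_of_le_of_ne le_top (ENat.coe_ne_top m))) (lt_irrefl _)
    · intro _
      refine ⟨⟨h0, ?_⟩, h1⟩
      intro i hi
      obtain ⟨j, rfl⟩ : ∃ j, i = j + 1 := ⟨i - 1, by omega⟩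
      rw [hall (j+1), hall (j+1+1), binUp_diag]
end

section
/- Let h be a Macaulay function of type a ≥ 1 with s = s_0(h) finite. Then Σ_{0 ≤ k < s} h(k) = C(a+s-1, s-1). In particular, if h has finite support, then Σ_{k ∈ ℕ} h(k) ≥ C(a+s-1, s-1). -/
open scoped BigOperators

lemma lead_choose (b i : ℕ) : lead ((b + i + 1).choose (i+1)) (i+1) = b + i + 1 := by
  have hset : {m : ℕ | Nat.choose m (i+1) ≤ (b + i + 1).choose (i+1)} = Set.Iic (b + i + 1) := by
    ext m
    simp only [Set.mem_setOf_eq, Set.mem_Iic]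
    constructor
    · intro hm
      by_contra hlt
      push_neg at hlt
      have h1 : (b + i + 2).choose (i+1) ≤ m.choose (i+1) := Nat.choose_le_choose _ hlt
      have h2 : (b + i + 2).choose (i+1) = (b+i+1).choose i + (b+i+1).choose (i+1) :=
        Nat.choose_succ_succ _ _
      have h3 : 0 < (b+i+1).choose i := Nat.choose_pos (by omega)
      omega
    · intro hm
      exact Nat.choose_le_choose _ hm
  rw [lead, hset, csSup_Iic]

lemma binUp_choose (b i : ℕ) :
    binUp (i+1) ((b + i + 1).choose (i+1)) = (b + i + 2).choose (i+2) := by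
  have hpos : 0 < (b + i + 1).choose (i+1) := Nat.choose_pos (by omega)
  rw [binUp, if_neg hpos.ne', lead_choose, Nat.sub_self, binUp_zero]
  have e : b + i + 1 + 1 = b + i + 2 := by omega
  rw [e, Nat.add_zero]

lemma sum_choose_shift (b : ℕ) : ∀ t : ℕ,
    ∑ k ∈ Finset.range (t+1), (b + k).choose k = (b + t + 1).choose t := by
  intro t
  induction t with
  | zero => simp
  | succ t ih =>
    rw [Finset.sum_range_succ, ih]
    have e : b + (t + 1) = b + t + 1 := by omega
    rw [e]
    exact (Nat.choose_succ_succ (b + t + 1) t).symm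

/-- Remark 2.14: for a Macaulay function of type `a ≥ 1`
with `s = s₀(h)` finite, `∑_{0 ≤ k < s} h(k) = C(a+s-1, s-1)`; in particular,
if `h` has finite support, `∑_k h(k) ≥ C(a+s-1, s-1)`. -/
theorem macaulay_sum_lower_bound (h : ℕ → ℕ) (a s : ℕ)
    (hM : MacaulayFun h) (ha : h 1 = a) (ha1 : 1 ≤ a)
    (hs : s0M h = (s : ℕ∞)) :
    (∑ k ∈ Finset.range s, h k = Nat.choose (a + s - 1) (s - 1)) ∧
    ((Function.support h).Finite →
      Nat.choose (a + s - 1) (s - 1) ≤ ∑ᶠ k : ℕ, h k) := by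
  obtain ⟨h0, hmac⟩ := hM
  set S : Set ℕ := {n : ℕ | h n < Nat.choose (h 1 + n - 1) n} with hS
  -- S is nonempty and s = sInf S
  have hSne : S.Nonempty := by
    by_contra hemp
    have : {x : ℕ∞ | ∃ n : ℕ, x = (n : ℕ∞) ∧ h n < Nat.choose (h 1 + n - 1) n} = ∅ := by
      ext x
      simp only [Set.mem_setOf_eq, Set.mem_empty_iff_false, iff_false]
      rintro ⟨n, -, hn⟩
      exact hemp ⟨n, hn⟩
    rw [s0M, this, sInf_empty] at hs
    exact (ENat.coe_ne_top s) hs.symm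
  have hseq : s = sInf S := by
    have : s0M h = ((sInf S : ℕ) : ℕ∞) := by
      apply le_antisymm
      · exact sInf_le ⟨sInf S, rfl, Nat.sInf_mem hSne⟩
      · apply le_sInf
        rintro x ⟨n, rfl, hn⟩
        exact_mod_cast Nat.sInf_le (show n ∈ S from hn)
    rw [hs] at this
    exact_mod_cast this
  have hnotlt : ∀ n < s, Nat.choose (h 1 + n - 1) n ≤ h n := by
    intro n hn
    have : n ∉ S := by rw [hseq] at hn; exact Nat.notMem_of_lt_sInf hn
    simpa [hS] using this
  have hs1 : 1 ≤ s := by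
    rcases Nat.eq_zero_or_pos s with h0s | h0s
    · exfalso
      have : sInf S ∈ S := Nat.sInf_mem hSne
      rw [← hseq, h0s] at this
      simp [hS, h0, ha] at this
    · exact h0s
  -- key: h n = C(a-1+n, n) for n < s
  have heq : ∀ n, n < s → h n = (a - 1 + n).choose n := by
    intro n
    induction n with
    | zero => intro _; simpa using h0
    | succ n ih =>
      intro hns
      have hub : h (n+1) ≤ (a - 1 + (n+1)).choose (n+1) := by
        rcases Nat.eq_zero_or_pos n with rfl | hn1
        · have e : a - 1 + 1 = a := by omega
          rw [show (0:ℕ)+1 = 1 from rfl] at *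
          rw [e, Nat.choose_one_right, ha]
        · have hhn : h n = (a - 1 + n).choose n := ih (by omega)
          have := hmac n hn1
          rw [hhn] at this
          obtain ⟨m, rfl⟩ : ∃ m, n = m + 1 := ⟨n - 1, by omega⟩
          have hb : a - 1 + (m+1) = (a-1) + m + 1 := by omega
          rw [hb, binUp_choose] at this
          calc h (m+1+1) ≤ (a - 1 + m + 2).choose (m+2) := this
            _ = (a - 1 + (m+1+1)).choose (m+1+1) := by congr 1 <;> omega
      have hlb := hnotlt (n+1) hns
      rw [ha] at hlb
      have he : a + (n+1) - 1 = a - 1 + (n+1) := by omega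
      rw [he] at hlb
      omega
  -- the sum
  have hsum : ∑ k ∈ Finset.range s, h k = Nat.choose (a + s - 1) (s - 1) := by
    obtain ⟨t, rfl⟩ : ∃ t, s = t + 1 := ⟨s - 1, by omega⟩
    have h1 : ∑ k ∈ Finset.range (t+1), h k
        = ∑ k ∈ Finset.range (t+1), ((a-1) + k).choose k := by
      apply Finset.sum_congr rfl
      intro k hk
      exact heq k (Finset.mem_range.mp hk)
    rw [h1, sum_choose_shift]
    congr 1 <;> omega
  refine ⟨hsum, fun hfin => ?_⟩
  rw [← hsum]
  have hss : Function.support h ⊆ ↑(Finset.range s ∪ hfin.toFinset) := by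
    intro k hk
    simp only [Finset.coe_union, Set.mem_union, Finset.coe_range, Set.mem_Iio,
      Set.Finite.coe_toFinset]
    exact Or.inr hk
  rw [finsum_eq_finset_sum_of_support_subset h hss]
  exact Finset.sum_le_sum_of_subset (Finset.subset_union_left)
end

section
/- Let h be a finitely supported Macaulay function of type 3 (i.e. h(0) = 1 and h(1) = 3), extended by 0 to negative integers, and let γ = -∂h, i.e. γ(n) = h(n-1) - h(n). Then there exist an integer r ≥ 1 and positive characters γ_0, …, γ_r such that sup γ_i < s_0(γ_{i-1}) for 1 ≤ i ≤ r and γ = γ_0 + γ_1[-1] + ⋯ + γ_r[-r]; moreover r + 1 = s_0(h). -/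
open scoped BigOperators

namespace MacD

/-- partial triangle sums: `T n d = (n+1) + n + ⋯ + (n+2-d)` -/
def T (n d : ℕ) : ℕ := ∑ k ∈ Finset.range d, (n + 1 - k)

lemma T_zero (n : ℕ) : T n 0 = 0 := by simp [T]

lemma T_succ (n d : ℕ) : T n (d+1) = T n d + (n + 1 - d) := by
  simp [T, Finset.sum_range_succ]

lemma T_mono (n : ℕ) {d d' : ℕ} (h : d ≤ d') : T n d ≤ T n d' := by
  unfold T
  exact Finset.sum_le_sum_of_subset (Finset.range_subset_range.2 h)

lemma T_one (n : ℕ) : T n 1 = n + 1 := by simp [T]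

lemma T_shift (n d : ℕ) : T (n+1) (d+1) = T n d + (n + 2) := by
  unfold T
  rw [Finset.sum_range_succ']
  have : ∀ k ∈ Finset.range d, (n + 1 + 1 - (k+1)) = (n + 1 - k) := by
    intro k _; omega
  rw [Finset.sum_congr rfl this]
  simp

lemma T_same (n d : ℕ) (hd : d ≤ n + 1) : T (n+1) d = T n d + d := by
  unfold T
  have h1 : ∑ k ∈ Finset.range d, (n + 1 + 1 - k) = ∑ k ∈ Finset.range d, ((n + 1 - k) + 1) := by
    refine Finset.sum_congr rfl ?_
    intro k hk
    simp only [Finset.mem_range] at hk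
    omega
  rw [h1, Finset.sum_add_distrib]
  simp

lemma T_full (n : ℕ) : T n (n+1) = Nat.choose (n+2) 2 := by
  induction n with
  | zero => simp [T]
  | succ n ih =>
      rw [T_shift, ih]
      have : (n+3).choose 2 = (n+2).choose 1 + (n+2).choose 2 := Nat.choose_succ_succ (n+2) 1
      simp [this, Nat.choose_one_right]
      omega

lemma T_stable (n d : ℕ) (hd : n + 1 ≤ d) : T n d = Nat.choose (n+2) 2 := by
  rw [← T_full n]
  unfold T
  rw [Finset.range_eq_Ico,
    ← Finset.sum_Ico_consecutive (fun k => n+1-k) (Nat.zero_le (n+1)) hd]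
  have : ∑ k ∈ Finset.Ico (n+1) d, (n+1-k) = 0 := by
    apply Finset.sum_eq_zero
    intro k hk
    simp only [Finset.mem_Ico] at hk
    omega
  rw [Finset.range_eq_Ico]
  omega

lemma lead_eq {a i m : ℕ} (hi : 1 ≤ i) (h1 : Nat.choose m i ≤ a)
    (h2 : a < Nat.choose (m+1) i) : lead a i = m := by
  apply IsGreatest.csSup_eq
  constructor
  · exact h1
  · intro x hx
    by_contra hc
    push_neg at hc
    have : Nat.choose (m+1) i ≤ Nat.choose x i := Nat.choose_le_choose i hc
    exact absurd hx (by simp only [Set.mem_setOf_eq]; omega)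

lemma binUp_zero (i : ℕ) : binUp i 0 = 0 := by
  cases i <;> simp [binUp]

lemma choose_self_succ (n : ℕ) : Nat.choose (n+1) n = n + 1 := by
  have := Nat.choose_symm (n := n+1) (k := 1) (by omega)
  simp only [Nat.add_sub_cancel] at this
  rw [this, Nat.choose_one_right]

lemma choose_two_sub (n : ℕ) : Nat.choose (n+2) n = Nat.choose (n+2) 2 := by
  have := Nat.choose_symm (n := n+2) (k := 2) (by omega)
  simp only [Nat.add_sub_cancel] at this
  exact this

lemma T_lt_full (n d e : ℕ) (hd : d ≤ n) (he : e + d ≤ n) :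
    T n d + e < Nat.choose (n+2) 2 := by
  have h1 : T n d + e < T n (d+1) := by
    rw [T_succ]; omega
  have h2 : T n (d+1) ≤ T n (n+1) := T_mono n (by omega)
  rw [T_full] at h2
  omega

/-- The key closed formula: in the regime of type-3 functions,
`binUp n (T n A + e) = T n A + e + A`. -/
lemma binUp_formula : ∀ n A e : ℕ, 1 ≤ n → A ≤ n → e + A ≤ n → 1 ≤ T n A + e →
    binUp n (T n A + e) = T n A + e + A := by
  intro n
  induction n with
  | zero => intro A e h; omega
  | succ n ih =>
    intro A e _ hA he ha
    set a := T (n+1) A + e with hadef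
    rcases Nat.eq_zero_or_pos A with rfl | hApos
    · -- A = 0 : a = e, 1 ≤ a ≤ n+1
      have hae : a = e := by simp [hadef, T_zero]
      have h1 : 1 ≤ a := ha
      have h2 : a ≤ n + 1 := by omega
      have hlead : lead a (n+1) = n+1 := by
        apply lead_eq (by omega)
        · rw [Nat.choose_self]; omega
        · rw [choose_self_succ]; omega
      have hne : a ≠ 0 := by omega
      rw [show binUp (n+1) a =
          Nat.choose (lead a (n+1) + 1) (n+2) + binUp n (a - Nat.choose (lead a (n+1)) (n+1))
          from by rw [binUp]; simp [hne]]
      rw [hlead, Nat.choose_self, Nat.choose_self]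
      rcases Nat.eq_or_lt_of_le h1 with h1' | h1'
      · rw [← h1']
        simp [binUp_zero]
      · -- a ≥ 2, so n ≥ 1
        have hn1 : 1 ≤ n := by omega
        have := ih 0 (a - 1) hn1 (by omega) (by omega) (by simp [T_zero]; omega)
        simp only [T_zero, Nat.zero_add] at this
        rw [this]
        omega
    · -- A ≥ 1
      have haT : T (n+1) 1 ≤ T (n+1) A := T_mono _ hApos
      rw [T_one] at haT
      have hnorm : Nat.choose (n+1+2) 2 = Nat.choose (n+3) 2 := by
        rw [show n+1+2 = n+3 from by omega]
      have hfull : a < Nat.choose (n+3) 2 := by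
        have := T_lt_full (n+1) A e hA he
        omega
      have hlead : lead a (n+1) = n+2 := by
        apply lead_eq (by omega)
        · rw [choose_self_succ]; omega
        · rw [choose_two_sub (n+1), hnorm]; omega
      have hne : a ≠ 0 := by omega
      rw [show binUp (n+1) a =
          Nat.choose (lead a (n+1) + 1) (n+2) + binUp n (a - Nat.choose (lead a (n+1)) (n+1))
          from by rw [binUp]; simp [hne]]
      rw [hlead]
      rw [show Nat.choose (n+2) (n+1) = n + 2 from Nat.choose_succ_self_right (n+1),
        show Nat.choose (n+2+1) (n+2) = n + 3 from Nat.choose_succ_self_right (n+2)]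
      -- a - (n+2) = T n (A-1) + e
      obtain ⟨B, rfl⟩ : ∃ B, A = B + 1 := ⟨A - 1, by omega⟩
      have hsplit : a = T n B + (n+2) + e := by
        rw [hadef, T_shift]
      have harem : a - (n+2) = T n B + e := by omega
      rw [harem]
      rcases Nat.eq_zero_or_pos (T n B + e) with hz | hz
      · -- remainder 0 : B = 0 (else T n B ≥ n+1 > 0)
        have hB : B = 0 := by
          by_contra hB
          have : T n 1 ≤ T n B := T_mono _ (by omega)
          rw [T_one] at this
          omega
        rw [hz, binUp_zero]
        subst hB
        rw [T_zero] at hsplit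
        omega
      · have hn1 : 1 ≤ n := by
          by_contra hn
          have : n = 0 := by omega
          subst this
          have : B = 0 := by omega
          subst this
          simp [T_zero] at hz
          omega
        rw [ih B e hn1 (by omega) (by omega) hz]
        omega

lemma binUp_full_eq' (m : ℕ) :
    binUp (m+1) (Nat.choose (m+3) 2) = Nat.choose (m+4) 2 := by
  set a := Nat.choose (m+3) 2 with hadef
  have hpos : 0 < a := Nat.choose_pos (by omega)
  have hle : Nat.choose (m+3) (m+1) ≤ a := by
    rw [show Nat.choose (m+3) (m+1) = Nat.choose (m+1+2) 2 from choose_two_sub (m+1),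
      show m+1+2 = m+3 from by omega]
  have hlt : a < Nat.choose (m+4) (m+1) := by
    have h1 : Nat.choose (m+4) (m+1) = Nat.choose (m+4) 3 := by
      have := Nat.choose_symm (n := m+4) (k := 3) (by omega)
      rw [show m + 4 - 3 = m + 1 from by omega] at this
      exact this
    have h2 : Nat.choose (m+4) 3 = Nat.choose (m+3) 2 + Nat.choose (m+3) 3 := by
      have := Nat.choose_succ_succ (m+3) 2
      simpa [show m+3+1 = m+4 from by omega] using this
    have h3 : 0 < Nat.choose (m+3) 3 := Nat.choose_pos (by omega)
    omega
  have hlead : lead a (m+1) = m + 3 := lead_eq (by omega) hle (by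
    rw [show m+3+1 = m+4 from by omega]; exact hlt)
  have hne : a ≠ 0 := by omega
  rw [show binUp (m+1) a =
      Nat.choose (lead a (m+1) + 1) (m+2) + binUp m (a - Nat.choose (lead a (m+1)) (m+1))
      from by rw [binUp]; simp [hne]]
  rw [hlead]
  have hc1 : Nat.choose (m+3+1) (m+2) = Nat.choose (m+4) 2 := by
    rw [show m+3+1 = m+4 from by omega]
    have := Nat.choose_symm (n := m+4) (k := 2) (by omega)
    rw [show m + 4 - 2 = m + 2 from by omega] at this
    exact this
  rw [hc1, show Nat.choose (m+3) (m+1) = a from by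
    rw [hadef, ← choose_two_sub (m+1), show m+1+2 = m+3 from by omega], Nat.sub_self, binUp_zero]
  omega

section Development

variable (f : ℕ → ℕ)

/-- number of complete initial rows in the triangle representation of `f n` -/
noncomputable def AA (n : ℕ) : ℕ := Nat.findGreatest (fun d => T n d ≤ f n) (n+1)

/-- remainder -/
noncomputable def EE (n : ℕ) : ℕ := f n - T n (AA f n)

lemma AA_spec (n : ℕ) : T n (AA f n) ≤ f n := by
  unfold AA
  exact Nat.findGreatest_spec (P := fun d => T n d ≤ f n) (Nat.zero_le _) (by show T n 0 ≤ f n; rw [T_zero]; omega)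

lemma AA_le (n : ℕ) : AA f n ≤ n + 1 := Nat.findGreatest_le _

lemma EE_spec (n : ℕ) : f n = T n (AA f n) + EE f n := by
  have := AA_spec f n
  unfold EE
  omega

lemma AA_lt (n : ℕ) (hd : AA f n ≤ n) : f n < T n (AA f n + 1) := by
  have h' := Nat.findGreatest_is_greatest (P := fun d => T n d ≤ f n)
    (k := AA f n + 1) (n := n+1) (Nat.lt_succ_self _) (by omega)
  simp only [not_le] at h'
  exact h'

lemma AA_full (n : ℕ) (hf : T n (n+1) ≤ f n) : AA f n = n + 1 :=
  le_antisymm (AA_le f n) (Nat.le_findGreatest le_rfl hf)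

lemma AA_def_lt (n : ℕ) (hf : f n < T n (n+1)) : AA f n ≤ n := by
  by_contra hc
  have h1 : AA f n = n + 1 := by have := AA_le f n; omega
  have h2 := AA_spec f n
  rw [h1] at h2
  omega

lemma EE_bound (n : ℕ) (hd : AA f n ≤ n) : EE f n + AA f n ≤ n := by
  have h1 := AA_lt f n hd
  have h2 := EE_spec f n
  rw [T_succ] at h1
  omega

lemma AA_of_zero (n : ℕ) (hz : f n = 0) : AA f n = 0 ∧ EE f n = 0 := by
  have h1 : AA f n = 0 := by
    by_contra hc
    have h2 : T n 1 ≤ T n (AA f n) := T_mono n (by omega)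
    have := AA_spec f n
    rw [T_one] at h2
    omega
  refine ⟨h1, ?_⟩
  have := EE_spec f n
  rw [h1, T_zero] at this
  omega

end Development

section Mac

variable {h : ℕ → ℕ}

lemma h_le_full (hM : MacaulayFun h) (h1 : h 1 = 3) :
    ∀ n, h n ≤ T n (n+1) := by
  intro n
  induction n with
  | zero => rw [hM.1]; simp [T]
  | succ n ih =>
    rcases Nat.eq_zero_or_pos n with rfl | hn
    · rw [h1]; rw [T_full]; simp
    · have hb := hM.2 n hn
      rcases Nat.lt_or_ge (h n) (T n (n+1)) with hlt | hge
      · rcases Nat.eq_zero_or_pos (h n) with hz | hpos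
        · rw [hz, binUp_zero] at hb
          omega
        · have hdef : AA h n ≤ n := AA_def_lt h n hlt
          have heq := EE_spec h n
          have hbd := EE_bound h n hdef
          have := binUp_formula n (AA h n) (EE h n) hn hdef (by omega) (by omega)
          rw [← heq] at this
          rw [this] at hb
          have hsh := T_shift n (n+1)
          omega
      · have heq : h n = T n (n+1) := le_antisymm ih hge
        obtain ⟨m, rfl⟩ : ∃ m, n = m + 1 := ⟨n-1, by omega⟩
        rw [heq, T_full, show m+1+2 = m+3 from by omega, binUp_full_eq' m] at hb
        rw [T_full, show m+1+1+2 = m+4 from by omega]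
        omega

lemma key_step (hM : MacaulayFun h) (n : ℕ) (hn : 1 ≤ n) (hdef : AA h n ≤ n) :
    h (n+1) ≤ h n + AA h n := by
  have hb := hM.2 n hn
  rcases Nat.eq_zero_or_pos (h n) with hz | hpos
  · rw [hz, binUp_zero] at hb; omega
  · have heq := EE_spec h n
    have hbd := EE_bound h n hdef
    have := binUp_formula n (AA h n) (EE h n) hn hdef (by omega) (by omega)
    rw [← heq] at this
    omega

lemma step_A (hM : MacaulayFun h) (n : ℕ) (hn : 1 ≤ n) (hdef : AA h n ≤ n) :
    AA h (n+1) ≤ AA h n ∧ AA h (n+1) ≤ n + 1 ∧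
      (AA h (n+1) = AA h n → EE h (n+1) ≤ EE h n) := by
  have hks := key_step hM n hn hdef
  have heq := EE_spec h n
  have hbd := EE_bound h n hdef
  have hlt := AA_lt h n hdef
  have hdef1 : AA h (n+1) ≤ n + 1 := by
    apply AA_def_lt
    have hsh := T_shift n (n+1)
    have hmono : T n (AA h n) ≤ T n (n+1) := T_mono n (by omega)
    omega
  have hA : AA h (n+1) ≤ AA h n := by
    by_contra hc
    push_neg at hc
    have h1' : T (n+1) (AA h n + 1) ≤ T (n+1) (AA h (n+1)) := T_mono _ (by omega)
    have h2' := AA_spec h (n+1)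
    have h3' := T_shift n (AA h n)
    omega
  refine ⟨hA, hdef1, ?_⟩
  intro heqA
  have h4 := EE_spec h (n+1)
  rw [heqA] at h4
  have h5 : T (n+1) (AA h n) = T n (AA h n) + AA h n := T_same n (AA h n) (by omega)
  omega

/-- the threshold `s₀(h)` as a natural number -/
noncomputable def SS (h : ℕ → ℕ) : ℕ := sInf {n | h n < T n (n+1)}

lemma ex_zero (hfin : (Function.support h).Finite) :
    ∃ N, ∀ n, N ≤ n → h n = 0 := by
  rcases Set.Finite.bddAbove hfin with ⟨N, hN⟩
  refine ⟨N+1, fun n hn => ?_⟩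
  by_contra hc
  have : n ∈ Function.support h := hc
  have := hN this
  omega

lemma SS_nonempty (hfin : (Function.support h).Finite) :
    {n | h n < T n (n+1)}.Nonempty := by
  rcases ex_zero hfin with ⟨N, hN⟩
  refine ⟨N, ?_⟩
  have h1 : T N 1 ≤ T N (N+1) := T_mono N (by omega)
  rw [T_one] at h1
  have := hN N le_rfl
  simp only [Set.mem_setOf_eq]
  omega

lemma SS_mem (hfin : (Function.support h).Finite) : h (SS h) < T (SS h) (SS h + 1) :=
  Nat.sInf_mem (SS_nonempty hfin)

lemma SS_lt_full (hM : MacaulayFun h) (h1 : h 1 = 3) {n : ℕ} (hn : n < SS h) :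
    h n = T n (n+1) := by
  have h2 := Nat.notMem_of_lt_sInf (s := {n | h n < T n (n+1)}) hn
  simp only [Set.mem_setOf_eq, not_lt] at h2
  exact le_antisymm (h_le_full hM h1 n) h2

lemma SS_ge_two (hM : MacaulayFun h) (h1 : h 1 = 3) (hfin : (Function.support h).Finite) :
    2 ≤ SS h := by
  by_contra hc
  push_neg at hc
  interval_cases hs : SS h
  · have := SS_mem hfin
    rw [hs] at this
    rw [hM.1] at this
    simp [T] at this
  · have := SS_mem hfin
    rw [hs] at this
    rw [h1] at this
    have hT : T 1 (1+1) = 3 := by simp [T, Finset.sum_range_succ]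
    omega

lemma AA_lt_full (hM : MacaulayFun h) (h1 : h 1 = 3) {n : ℕ} (hn : n < SS h) :
    AA h n = n + 1 ∧ EE h n = 0 := by
  have heq := SS_lt_full hM h1 hn
  have hA : AA h n = n + 1 := AA_full h n (le_of_eq heq.symm)
  refine ⟨hA, ?_⟩
  have := EE_spec h n
  rw [hA, ← heq] at this
  omega

lemma L_def (hM : MacaulayFun h) (h1 : h 1 = 3) (hfin : (Function.support h).Finite) :
    ∀ n, SS h ≤ n → AA h n ≤ n := by
  intro n hn
  induction n, hn using Nat.le_induction with
  | base => exact AA_def_lt h (SS h) (SS_mem hfin)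
  | succ n hn ih =>
      have h2 := SS_ge_two hM h1 hfin
      exact (step_A hM n (by omega) ih).2.1


lemma L_mono (hM : MacaulayFun h) (h1 : h 1 = 3) (hfin : (Function.support h).Finite) :
    ∀ k n, SS h ≤ k → k ≤ n → AA h n ≤ AA h k := by
  intro k n hk hkn
  induction n, hkn using Nat.le_induction with
  | base => exact le_rfl
  | succ n hkn ih =>
      have h2 := SS_ge_two hM h1 hfin
      have := (step_A hM n (by omega) (L_def hM h1 hfin n (by omega))).1
      omega

lemma L_run (hM : MacaulayFun h) (h1 : h 1 = 3) (hfin : (Function.support h).Finite) :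
    ∀ k n, SS h ≤ k → k ≤ n → AA h n = AA h k → EE h n ≤ EE h k := by
  intro k n hk hkn
  induction n, hkn using Nat.le_induction with
  | base => intro _; exact le_rfl
  | succ n hkn ih =>
      intro hA
      have h2 := SS_ge_two hM h1 hfin
      have hd : AA h n ≤ n := L_def hM h1 hfin n (by omega)
      have hs := step_A hM n (by omega) hd
      have hm1 : AA h (n+1) ≤ AA h n := hs.1
      have hm2 : AA h n ≤ AA h k := L_mono hM h1 hfin k n hk hkn
      have hAe : AA h n = AA h k := by omega
      have := hs.2.2 (by omega)
      have := ih hAe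
      omega

lemma AA_le_SS (hM : MacaulayFun h) (h1 : h 1 = 3) (hfin : (Function.support h).Finite) :
    ∀ n, AA h n ≤ SS h := by
  intro n
  rcases Nat.lt_or_ge n (SS h) with hn | hn
  · have := (AA_lt_full hM h1 hn).1
    omega
  · have h1' := L_mono hM h1 hfin (SS h) n le_rfl hn
    have h2' := L_def hM h1 hfin (SS h) le_rfl
    omega

lemma EE_eq_zero_top (hM : MacaulayFun h) (h1 : h 1 = 3) (hfin : (Function.support h).Finite)
    {n : ℕ} (hA : AA h n = SS h) : EE h n = 0 := by
  rcases Nat.lt_or_ge n (SS h) with hn | hn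
  · exact (AA_lt_full hM h1 hn).2
  · have hASS : AA h (SS h) = SS h := by
      have h1' := L_mono hM h1 hfin (SS h) n le_rfl hn
      have h2' := L_def hM h1 hfin (SS h) le_rfl
      omega
    have hE : EE h (SS h) = 0 := by
      have := EE_bound h (SS h) (by omega)
      omega
    have := L_run hM h1 hfin (SS h) n le_rfl hn (by omega)
    omega

/-- start of the tail of the `i`-th layer -/
noncomputable def sL (h : ℕ → ℕ) (i : ℕ) : ℕ := sInf {m | AA h (m+i) ≤ i}

/-- the `i`-th layer function -/
noncomputable def HL (h : ℕ → ℕ) (i m : ℕ) : ℕ :=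
  if i < AA h (m+i) then m+1 else if AA h (m+i) = i then EE h (m+i) else 0

lemma HL_of_hzero {i m : ℕ} (hz : h (m+i) = 0) : HL h i m = 0 := by
  obtain ⟨hA, hE⟩ := AA_of_zero h (m+i) hz
  unfold HL
  rcases Nat.eq_zero_or_pos i with rfl | hi
  · simp only [Nat.add_zero] at hA hE ⊢
    simp [hA, hE]
  · rw [if_neg (by omega), if_neg (by omega)]

lemma sL_nonempty (hfin : (Function.support h).Finite) (i : ℕ) :
    {m | AA h (m+i) ≤ i}.Nonempty := by
  rcases ex_zero hfin with ⟨N, hN⟩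
  refine ⟨N, ?_⟩
  have := (AA_of_zero h (N+i) (hN _ (by omega))).1
  simp only [Set.mem_setOf_eq]
  omega

lemma sL_spec (hfin : (Function.support h).Finite) (i : ℕ) :
    AA h (sL h i + i) ≤ i := Nat.sInf_mem (sL_nonempty hfin i)

lemma sL_min {i m : ℕ} (hm : m < sL h i) : i < AA h (m+i) := by
  have := Nat.notMem_of_lt_sInf (s := {m | AA h (m+i) ≤ i}) hm
  simp only [Set.mem_setOf_eq, not_le] at this
  exact this

lemma sL_ge (hM : MacaulayFun h) (h1 : h 1 = 3) (hfin : (Function.support h).Finite)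
    {i : ℕ} (hi : i < SS h) : SS h ≤ sL h i + i ∧ 1 ≤ sL h i := by
  have key : ∀ m, m + i < SS h → i < AA h (m+i) := by
    intro m hm
    have := (AA_lt_full hM h1 hm).1
    omega
  have hspec := sL_spec hfin i
  constructor
  · by_contra hc
    push_neg at hc
    have h2 : i < AA h (sL h i + i) := key _ hc
    omega
  · by_contra hc
    push_neg at hc
    have h0 : sL h i = 0 := by omega
    have h2 : i < AA h (0 + i) := key 0 (by omega)
    rw [h0] at hspec
    omega

lemma HL_full {i m : ℕ} (hm : m < sL h i) : HL h i m = m + 1 := by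
  unfold HL
  rw [if_pos (sL_min hm)]

lemma HL_top (hfin : (Function.support h).Finite) (i : ℕ) : HL h i (sL h i) ≤ sL h i := by
  have hspec := sL_spec hfin i
  unfold HL
  rw [if_neg (by omega)]
  rcases Nat.lt_or_ge (AA h (sL h i + i)) i with hlt | hge
  · rw [if_neg (by omega)]
    omega
  · have hAeq : AA h (sL h i + i) = i := by omega
    rw [if_pos hAeq]
    have := EE_bound h (sL h i + i) (by omega)
    omega

lemma HL_anti (hM : MacaulayFun h) (h1 : h 1 = 3) (hfin : (Function.support h).Finite)
    {i : ℕ} (hi : i < SS h) :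
    ∀ m, sL h i ≤ m → HL h i (m+1) ≤ HL h i m := by
  intro m hm
  have hge := sL_ge hM h1 hfin hi
  have hSn : SS h ≤ m + i := by omega
  have hAn : AA h (m+i) ≤ i := by
    have := L_mono hM h1 hfin (sL h i + i) (m+i) (by omega) (by omega)
    have := sL_spec hfin i
    omega
  have hAn1 : AA h (m+1+i) ≤ AA h (m+i) := by
    have := L_mono hM h1 hfin (m+i) (m+1+i) hSn (by omega)
    omega
  unfold HL
  rw [if_neg (show ¬ i < AA h (m+1+i) by omega), if_neg (show ¬ i < AA h (m+i) by omega)]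
  rcases Nat.lt_or_ge (AA h (m+1+i)) i with hlt | hgei
  · rw [if_neg (show ¬ AA h (m+1+i) = i by omega)]
    omega
  · have hA1 : AA h (m+1+i) = i := by omega
    have hA0 : AA h (m+i) = i := by omega
    rw [if_pos hA1, if_pos hA0]
    have := L_run hM h1 hfin (m+i) (m+1+i) hSn (by omega) (by omega)
    omega

lemma HL_support (hM : MacaulayFun h) (h1 : h 1 = 3) (hfin : (Function.support h).Finite)
    {i m : ℕ} (hi1 : 1 ≤ i) (hi2 : i < SS h) (hne : HL h i m ≠ 0) :
    m + 2 ≤ sL h (i-1) := by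
  have hAm : i ≤ AA h (m+i) := by
    unfold HL at hne
    by_contra hc
    push_neg at hc
    rw [if_neg (by omega), if_neg (by omega)] at hne
    exact hne rfl
  by_contra hc
  push_neg at hc
  -- then sL h (i-1) ≤ m+1, and its membership gives AA h (sL h (i-1) + (i-1)) ≤ i-1
  have hmem := sL_spec hfin (i-1)
  set m' := sL h (i-1) with hm'
  have hn' : m' + (i-1) ≤ m + i := by omega
  have hclaim : i ≤ AA h (m' + (i-1)) := by
    rcases Nat.lt_or_ge (m' + (i-1)) (SS h) with hlt | hge2
    · have := (AA_lt_full hM h1 hlt).1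
      omega
    · have := L_mono hM h1 hfin (m' + (i-1)) (m+i) hge2 hn'
      omega
  omega

lemma HL_start (hM : MacaulayFun h) (h1 : h 1 = 3) (hfin : (Function.support h).Finite)
    {i : ℕ} (hi : i < SS h) : HL h i 0 = 1 := by
  have := (sL_ge hM h1 hfin hi).2
  have := HL_full (h := h) (i := i) (m := 0) (by omega)
  omega

noncomputable def HLZ (h : ℕ → ℕ) (i : ℕ) (z : ℤ) : ℤ :=
  if z < 0 then 0 else (HL h i z.toNat : ℤ)

noncomputable def GammaZ (h : ℕ → ℕ) (i : ℕ) (z : ℤ) : ℤ := HLZ h i (z-1) - HLZ h i z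

lemma HLZ_neg {i : ℕ} {z : ℤ} (hz : z < 0) : HLZ h i z = 0 := by
  unfold HLZ
  rw [if_pos hz]

lemma HLZ_nat (i m : ℕ) : HLZ h i (m : ℤ) = (HL h i m : ℤ) := by
  unfold HLZ
  rw [if_neg (by omega)]
  simp

lemma GammaZ_nat {i : ℕ} {m : ℕ} (hm : 1 ≤ m) :
    GammaZ h i (m : ℤ) = (HL h i (m-1) : ℤ) - (HL h i m : ℤ) := by
  unfold GammaZ
  rw [show ((m:ℤ) - 1) = ((m - 1 : ℕ) : ℤ) from by omega, HLZ_nat, HLZ_nat]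

lemma HL_eventually_zero (hfin : (Function.support h).Finite) :
    ∃ N : ℕ, ∀ i m, N ≤ m → HL h i m = 0 := by
  rcases ex_zero hfin with ⟨N, hN⟩
  exact ⟨N, fun i m hm => HL_of_hzero (hN (m+i) (by omega))⟩

lemma Gamma_support (hfin : (Function.support h).Finite) (i : ℕ) :
    (Function.support (GammaZ h i)).Finite := by
  rcases HL_eventually_zero hfin with ⟨N, hN⟩
  apply Set.Finite.subset (Set.finite_Icc (0:ℤ) (N+1))
  intro z hz
  simp only [Function.mem_support] at hz
  simp only [Set.mem_Icc]
  constructor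
  · by_contra hc
    push_neg at hc
    rw [show GammaZ h i z = 0 from by
      unfold GammaZ; rw [HLZ_neg (by omega), HLZ_neg (by omega)]; ring] at hz
    exact hz rfl
  · by_contra hc
    push_neg at hc
    have e1 : HLZ h i z = 0 := by
      unfold HLZ
      rw [if_neg (by omega), hN i z.toNat (by omega)]
      simp
    have e2 : HLZ h i (z-1) = 0 := by
      unfold HLZ
      rw [if_neg (by omega), hN i (z-1).toNat (by omega)]
      simp
    rw [show GammaZ h i z = 0 from by unfold GammaZ; rw [e1, e2]; ring] at hz
    exact hz rfl

lemma HLZ_support (hfin : (Function.support h).Finite) (i : ℕ) :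
    (Function.support (HLZ h i)).Finite := by
  rcases HL_eventually_zero hfin with ⟨N, hN⟩
  apply Set.Finite.subset (Set.finite_Icc (0:ℤ) (N+1))
  intro z hz
  simp only [Function.mem_support] at hz
  simp only [Set.mem_Icc]
  constructor
  · by_contra hc
    push_neg at hc
    exact hz (HLZ_neg (by omega))
  · by_contra hc
    push_neg at hc
    refine hz ?_
    unfold HLZ
    rw [if_neg (by omega), hN i z.toNat (by omega)]
    simp

lemma Gamma_sum (hfin : (Function.support h).Finite) (i : ℕ) :
    ∑ᶠ z, GammaZ h i z = 0 := by
  have h1' : (Function.support (fun z => HLZ h i (z - 1))).Finite := by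
    have := (HLZ_support hfin i).preimage (f := fun z : ℤ => z - 1)
      (Set.injOn_of_injective (fun a b hab => by omega))
    exact this
  unfold GammaZ
  rw [finsum_sub_distrib h1' (HLZ_support hfin i)]
  have := finsum_comp_equiv (Equiv.subRight (1:ℤ)) (f := HLZ h i)
  simp only [Equiv.subRight_apply] at this
  rw [this]
  ring

lemma Gamma_neg (i : ℕ) : ∀ z : ℤ, z < 0 → GammaZ h i z = 0 := by
  intro z hz
  unfold GammaZ
  rw [HLZ_neg (by omega), HLZ_neg (by omega)]
  ring

lemma Gamma_zero (hM : MacaulayFun h) (h1 : h 1 = 3) (hfin : (Function.support h).Finite)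
    {i : ℕ} (hi : i < SS h) : GammaZ h i 0 = -1 := by
  unfold GammaZ
  rw [HLZ_neg (by omega), show (0:ℤ) = ((0:ℕ):ℤ) from rfl, HLZ_nat,
    HL_start hM h1 hfin hi]
  ring

lemma Gamma_fullpart (hM : MacaulayFun h) (h1 : h 1 = 3) (hfin : (Function.support h).Finite)
    {i : ℕ} (hi : i < SS h) {m : ℕ} (h1m : 1 ≤ m) (hm : m < sL h i) :
    GammaZ h i (m : ℤ) = -1 := by
  rw [GammaZ_nat h1m, HL_full hm, HL_full (show m - 1 < sL h i by omega)]
  have h2 : m - 1 + 1 = m := by omega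
  rw [h2]
  push_cast
  omega

lemma Gamma_at_top (hM : MacaulayFun h) (h1 : h 1 = 3) (hfin : (Function.support h).Finite)
    {i : ℕ} (hi : i < SS h) : 0 ≤ GammaZ h i ((sL h i : ℕ) : ℤ) := by
  have hs1 := (sL_ge hM h1 hfin hi).2
  rw [GammaZ_nat hs1, HL_full (show sL h i - 1 < sL h i by omega)]
  have htop := HL_top hfin i
  have : sL h i - 1 + 1 = sL h i := by omega
  rw [this]
  omega

lemma Gamma_s0 (hM : MacaulayFun h) (h1 : h 1 = 3) (hfin : (Function.support h).Finite)
    {i : ℕ} (hi : i < SS h) : s0C (GammaZ h i) = (sL h i : ℤ) := by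
  unfold s0C
  have hs1 := (sL_ge hM h1 hfin hi).2
  have hmem : ((sL h i : ℕ) : ℤ) ∈ {n : ℤ | 0 ≤ n ∧ GammaZ h i n ≠ -1} := by
    refine ⟨by omega, ?_⟩
    have := Gamma_at_top hM h1 hfin hi
    omega
  have hlb : ∀ z ∈ {n : ℤ | 0 ≤ n ∧ GammaZ h i n ≠ -1}, ((sL h i : ℕ) : ℤ) ≤ z := by
    rintro z ⟨hz0, hzne⟩
    by_contra hc
    push_neg at hc
    rcases eq_or_lt_of_le hz0 with hz | hz
    · exact hzne (by rw [← hz]; exact Gamma_zero hM h1 hfin hi)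
    · have : z = ((z.toNat : ℕ) : ℤ) := by omega
      rw [this] at hzne
      exact hzne (Gamma_fullpart hM h1 hfin hi (by omega) (by omega))
  exact le_antisymm (csInf_le ⟨0, fun z hz => hz.1⟩ hmem) (le_csInf ⟨_, hmem⟩ hlb)

lemma Gamma_pos (hM : MacaulayFun h) (h1 : h 1 = 3) (hfin : (Function.support h).Finite)
    {i : ℕ} (hi : i < SS h) : ∀ z : ℤ, ((sL h i : ℕ) : ℤ) ≤ z → 0 ≤ GammaZ h i z := by
  intro z hz
  have hs1 := (sL_ge hM h1 hfin hi).2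
  have hzn : z = ((z.toNat : ℕ) : ℤ) := by omega
  set m := z.toNat with hmdef
  have hm1 : 1 ≤ m := by omega
  rw [hzn, GammaZ_nat hm1]
  rcases Nat.lt_or_ge (m - 1) (sL h i) with hlt | hge
  · -- m - 1 = sL h i - 1 exactly (since m ≥ sL h i)
    have hme : m = sL h i := by omega
    rw [HL_full (show m - 1 < sL h i by omega)]
    have htop := HL_top hfin i
    have h2 : m - 1 + 1 = m := by omega
    rw [h2, hme]
    push_cast
    omega
  · have := HL_anti hM h1 hfin hi (m-1) hge
    have h2 : m - 1 + 1 = m := by omega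
    rw [h2] at this
    omega

lemma Gamma_sup (hM : MacaulayFun h) (h1 : h 1 = 3) (hfin : (Function.support h).Finite)
    {i : ℕ} (hi1 : 1 ≤ i) (hi : i < SS h) :
    supZ (GammaZ h i) < ((sL h (i-1) : ℕ) : ℤ) := by
  have hi' : i - 1 < SS h := by omega
  have hs1 := (sL_ge hM h1 hfin hi').2
  unfold supZ
  have hne : GammaZ h i 0 ≠ 0 := by
    rw [Gamma_zero hM h1 hfin hi]; omega
  have hub : ∀ z ∈ {n : ℤ | GammaZ h i n ≠ 0}, z ≤ ((sL h (i-1) : ℕ) : ℤ) - 1 := by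
    intro z hz
    simp only [Set.mem_setOf_eq] at hz
    by_contra hc
    push_neg at hc
    have hz0 : 0 ≤ z := by omega
    -- GammaZ h i z = HL (z-1).toNat - HL z.toNat ; both vanish
    have hzpos : 1 ≤ z := by omega
    have hv1 : HL h i (z.toNat) = 0 := by
      by_contra hv
      have := HL_support hM h1 hfin hi1 hi hv
      omega
    have hv2 : HL h i ((z-1).toNat) = 0 := by
      by_contra hv
      have := HL_support hM h1 hfin hi1 hi hv
      omega
    refine hz ?_
    unfold GammaZ HLZ
    rw [if_neg (by omega), if_neg (by omega)]
    rw [hv1, hv2]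
    ring
  have h0mem : (0:ℤ) ∈ {n : ℤ | GammaZ h i n ≠ 0} := hne
  apply lt_of_le_of_lt (csSup_le ⟨0, h0mem⟩ hub)
  omega

lemma sum_layers (hM : MacaulayFun h) (h1 : h 1 = 3) (hfin : (Function.support h).Finite)
    (n : ℕ) :
    ∑ i ∈ Finset.range (SS h), (if i ≤ n then HL h i (n-i) else 0) = h n := by
  set K := AA h n with hKdef
  have hK1 : K ≤ n + 1 := AA_le h n
  have hK2 : K ≤ SS h := AA_le_SS hM h1 hfin n
  have hspec := EE_spec h n
  rw [← hKdef] at hspec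
  have hterm : ∀ i, i ≤ n →
      HL h i (n-i) = (if i < K then n-i+1 else if K = i then EE h n else 0) := by
    intro i hin
    unfold HL
    rw [Nat.sub_add_cancel hin]
  rw [Finset.range_eq_Ico, ← Finset.sum_Ico_consecutive _ (Nat.zero_le K) hK2]
  have hpart1 : ∑ i ∈ Finset.Ico 0 K, (if i ≤ n then HL h i (n-i) else 0) = T n K := by
    rw [← Finset.range_eq_Ico]
    unfold T
    apply Finset.sum_congr rfl
    intro i hi
    simp only [Finset.mem_range] at hi
    have hin : i ≤ n := by omega
    rw [if_pos hin, hterm i hin, if_pos (by omega)]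
    omega
  have hpart2 : ∑ i ∈ Finset.Ico K (SS h), (if i ≤ n then HL h i (n-i) else 0) = EE h n := by
    rcases Nat.lt_or_ge K (SS h) with hKS | hKS
    · rw [Finset.sum_eq_single_of_mem K (Finset.mem_Ico.2 ⟨le_rfl, hKS⟩)]
      · rcases le_or_gt K n with hKn | hKn
        · rw [if_pos hKn, hterm K hKn, if_neg (lt_irrefl K), if_pos rfl]
        · rw [if_neg (by omega)]
          -- K = n+1 : full, EE = 0
          have hKeq : K = n + 1 := by omega
          have hle := h_le_full hM h1 n
          rw [hKeq] at hspec
          omega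
      · intro b hb hbK
        simp only [Finset.mem_Ico] at hb
        rcases le_or_gt b n with hbn | hbn
        · rw [if_pos hbn, hterm b hbn, if_neg (by omega), if_neg (by omega)]
        · rw [if_neg (by omega)]
    · have hKeq : K = SS h := le_antisymm hK2 hKS
      rw [show Finset.Ico K (SS h) = ∅ from Finset.Ico_eq_empty (by omega)]
      rw [Finset.sum_empty]
      exact (EE_eq_zero_top hM h1 hfin hKeq).symm
  rw [hpart1, hpart2]
  omega


lemma hz_sum (hM : MacaulayFun h) (h1 : h 1 = 3) (hfin : (Function.support h).Finite)
    (z : ℤ) :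
    (if z < 0 then 0 else ((h z.toNat : ℕ) : ℤ)) =
      ∑ i ∈ Finset.range (SS h), HLZ h i (z - (i:ℕ)) := by
  rcases lt_or_ge z 0 with hz | hz
  · rw [if_pos hz]
    symm
    apply Finset.sum_eq_zero
    intro i _
    exact HLZ_neg (by omega)
  · rw [if_neg (by omega)]
    set n := z.toNat with hn
    have hzn : z = (n : ℤ) := by omega
    have hcong : ∀ i ∈ Finset.range (SS h),
        HLZ h i (z - (i:ℕ)) = (((if i ≤ n then HL h i (n-i) else 0) : ℕ) : ℤ) := by
      intro i _
      rcases le_or_gt i n with hin | hin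
      · rw [if_pos hin, show z - (i:ℕ) = (((n - i : ℕ) : ℕ) : ℤ) from by omega, HLZ_nat]
      · rw [if_neg (by omega), HLZ_neg (by omega)]
        simp
    rw [Finset.sum_congr rfl hcong, ← Nat.cast_sum, sum_layers hM h1 hfin n]

lemma s0M_eq (hM : MacaulayFun h) (h1 : h 1 = 3) (hfin : (Function.support h).Finite) :
    s0M h = ((SS h : ℕ) : ℕ∞) := by
  unfold s0M
  have hcond : ∀ n : ℕ, Nat.choose (h 1 + n - 1) n = T n (n+1) := by
    intro n
    rw [h1, show 3 + n - 1 = n + 2 from by omega, choose_two_sub n]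
    exact (T_full n).symm
  apply le_antisymm
  · exact sInf_le ⟨SS h, rfl, by rw [hcond]; exact SS_mem hfin⟩
  · apply le_sInf
    rintro x ⟨n, rfl, hn⟩
    rw [hcond] at hn
    have hSn : SS h ≤ n := Nat.sInf_le hn
    exact_mod_cast Nat.cast_le.2 hSn

end Mac

end MacD


/-- Prop. 3.5: for a finitely supported Macaulay function
`h` of type 3, the character `γ = -∂h` decomposes as
`γ = γ₀ + γ₁[-1] + ⋯ + γ_r[-r]` with positive characters `γᵢ` satisfying
`sup γᵢ < s₀(γ_{i-1})`, and `r + 1 = s₀(h)`. -/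
theorem macaulay_type_three_decomposition (h : ℕ → ℕ)
    (hfin : (Function.support h).Finite)
    (hM : MacaulayFun h) (h1 : h 1 = 3)
    (hz : ℤ → ℤ) (hhz : ∀ n : ℤ, hz n = if n < 0 then 0 else (h n.toNat : ℤ))
    (γ : ℤ → ℤ) (hγ : ∀ n : ℤ, γ n = hz (n - 1) - hz n) :
    ∃ r : ℕ, 1 ≤ r ∧ ∃ Γ : ℕ → ℤ → ℤ,
      (∀ i ≤ r, PosChar (Γ i)) ∧
      (∀ i, 1 ≤ i → i ≤ r → supZ (Γ i) < s0C (Γ (i - 1))) ∧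
      (∀ n : ℤ, γ n = ∑ i ∈ Finset.range (r + 1), Γ i (n - i)) ∧
      s0M h = (r : ℕ∞) + 1 := by
  classical
  have hS2 : 2 ≤ MacD.SS h := MacD.SS_ge_two hM h1 hfin
  refine ⟨MacD.SS h - 1, by omega, fun i => MacD.GammaZ h i, ?_, ?_, ?_, ?_⟩
  · intro i hir
    have hi : i < MacD.SS h := by omega
    refine ⟨⟨MacD.Gamma_support hfin i, MacD.Gamma_sum hfin i⟩,
      MacD.Gamma_neg i, MacD.Gamma_zero hM h1 hfin hi, ?_⟩
    intro z hz
    rw [MacD.Gamma_s0 hM h1 hfin hi] at hz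
    exact MacD.Gamma_pos hM h1 hfin hi z hz
  · intro i hi1 hir
    have hi : i < MacD.SS h := by omega
    have hi' : i - 1 < MacD.SS h := by omega
    rw [MacD.Gamma_s0 hM h1 hfin hi']
    exact MacD.Gamma_sup hM h1 hfin hi1 hi
  · intro z
    have hr1 : MacD.SS h - 1 + 1 = MacD.SS h := by omega
    rw [hr1]
    have e1 := MacD.hz_sum hM h1 hfin (z - 1)
    have e2 := MacD.hz_sum hM h1 hfin z
    have hzz : ∀ w : ℤ, hz w = (if w < 0 then 0 else ((h w.toNat : ℕ) : ℤ)) := by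
      intro w
      rw [hhz w]
    rw [hγ z, hzz, hzz, e1, e2, ← Finset.sum_sub_distrib]
    apply Finset.sum_congr rfl
    intro i _
    show MacD.HLZ h i (z - 1 - (i:ℕ)) - MacD.HLZ h i (z - (i:ℕ)) = MacD.GammaZ h i (z - (i:ℕ))
    unfold MacD.GammaZ
    rw [show z - 1 - (i:ℕ) = z - (i:ℕ) - 1 from by ring]
  · rw [MacD.s0M_eq hM h1 hfin, show MacD.SS h = (MacD.SS h - 1) + 1 from by omega]
    push_cast
    ring
end

section
/- Let γ : ℤ → ℤ be a character with γ(n) = 0 for n < 0 and γ(0) = -1. Then the following are equivalent: (i) there exist positive characters γ_0 and γ_1 with sup γ_1 < s_0(γ_0) such that γ = γ_0 + γ_1[-1]; (ii) there exist integers 1 ≤ t < s such that γ(n) = -2 for 1 ≤ n ≤ t, γ(n) ≥ -1 for t < n < s, γ(n) ≥ 0 for n ≥ s, and Σ_{n > s} γ(n) ≤ s ≤ Σ_{n ≥ s} γ(n). Moreover, when these hold one can take t = s_0(γ_1) and s = s_0(γ_0). -/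
open scoped BigOperators

set_option maxHeartbeats 1000000

section Helpers

lemma sum_Ico_split (f : ℤ → ℤ) {a b c : ℤ} (hab : a ≤ b) (hbc : b ≤ c) :
    ∑ n ∈ Finset.Ico a c, f n = ∑ n ∈ Finset.Ico a b, f n + ∑ n ∈ Finset.Ico b c, f n := by
  rw [← Finset.sum_union (Finset.Ico_disjoint_Ico_consecutive a b c),
    Finset.Ico_union_Ico_eq_Ico hab hbc]

lemma sum_Ico_split_one (f : ℤ → ℤ) {a c : ℤ} (h : a < c) :
    ∑ n ∈ Finset.Ico a c, f n = f a + ∑ n ∈ Finset.Ico (a+1) c, f n := by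
  rw [sum_Ico_split f (by omega : a ≤ a+1) (by omega : a+1 ≤ c)]
  congr 1
  have : Finset.Ico a (a+1) = {a} := by ext n; simp [Finset.mem_Ico]; omega
  rw [this, Finset.sum_singleton]

lemma sum_shift (f : ℤ → ℤ) (a b : ℤ) :
    ∑ m ∈ Finset.Ico a b, f (m+1) = ∑ n ∈ Finset.Ico (a+1) (b+1), f n := by
  rw [← Finset.map_add_right_Ico a b 1, Finset.sum_map]
  simp [addRightEmbedding_apply]

lemma sum_neg_one {γ : ℤ → ℤ} {s : ℤ} (hs : 0 ≤ s)
    (hval : ∀ n, 0 ≤ n → n < s → γ n = -1) :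
    ∑ n ∈ Finset.Ico 0 s, γ n = -s := by
  have h1 : ∑ n ∈ Finset.Ico 0 s, γ n = ∑ _n ∈ Finset.Ico 0 s, (-1:ℤ) :=
    Finset.sum_congr rfl (fun n hn => by rw [Finset.mem_Ico] at hn; exact hval n hn.1 hn.2)
  rw [h1, Finset.sum_const, Int.card_Ico]
  rw [nsmul_eq_mul]
  have : ((s - 0).toNat : ℤ) = s := (Int.toNat_of_nonneg (by omega)).trans (by omega)
  rw [this]; ring

lemma finsum_eq_sum_Ico (γ : ℤ → ℤ) (N : ℤ)
    (hneg : ∀ n < 0, γ n = 0) (hN : ∀ n, N < n → γ n = 0) :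
    ∑ᶠ n, γ n = ∑ n ∈ Finset.Ico 0 (N+1), γ n := by
  apply finsum_eq_sum_of_support_subset
  intro n hn
  simp only [Finset.coe_Ico, Set.mem_Ico]
  rcases lt_or_ge n 0 with h | h
  · exact absurd (hneg n h) hn
  rcases lt_or_ge N n with h2 | h2
  · exact absurd (hN n h2) hn
  exact ⟨h, by omega⟩

lemma finsum_mem_gt (γ : ℤ → ℤ) (s N : ℤ) (hN : ∀ n, N < n → γ n = 0) :
    ∑ᶠ n ∈ {m : ℤ | s < m}, γ n = ∑ n ∈ Finset.Ico (s+1) (N+1), γ n := by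
  apply finsum_mem_eq_sum_of_inter_support_eq
  ext n
  simp only [Set.mem_inter_iff, Set.mem_setOf_eq, Function.mem_support, Finset.coe_Ico,
    Set.mem_Ico]
  constructor
  · rintro ⟨h1, h2⟩
    refine ⟨⟨by omega, ?_⟩, h2⟩
    by_contra h; exact h2 (hN n (by omega))
  · rintro ⟨⟨h1, _⟩, h2⟩; exact ⟨by omega, h2⟩

lemma finsum_mem_ge (γ : ℤ → ℤ) (s N : ℤ) (hN : ∀ n, N < n → γ n = 0) :
    ∑ᶠ n ∈ {m : ℤ | s ≤ m}, γ n = ∑ n ∈ Finset.Ico s (N+1), γ n := by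
  apply finsum_mem_eq_sum_of_inter_support_eq
  ext n
  simp only [Set.mem_inter_iff, Set.mem_setOf_eq, Function.mem_support, Finset.coe_Ico,
    Set.mem_Ico]
  constructor
  · rintro ⟨h1, h2⟩
    refine ⟨⟨h1, ?_⟩, h2⟩
    by_contra h; exact h2 (hN n (by omega))
  · rintro ⟨⟨h1, _⟩, h2⟩; exact ⟨h1, h2⟩

lemma exists_bound (γ : ℤ → ℤ) (hfin : (Function.support γ).Finite) (c : ℤ) :
    ∃ N : ℤ, c ≤ N ∧ ∀ n, N < n → γ n = 0 := by
  obtain ⟨B, hB⟩ := hfin.bddAbove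
  refine ⟨max B c, le_max_right _ _, fun n hn => ?_⟩
  by_contra h
  have := hB (Function.mem_support.2 h)
  simp only [max_lt_iff] at hn
  omega

lemma s0_facts {γ : ℤ → ℤ} (hfin : (Function.support γ).Finite) (h0 : γ 0 = -1) :
    1 ≤ s0C γ ∧ γ (s0C γ) ≠ -1 ∧ ∀ n, 0 ≤ n → n < s0C γ → γ n = -1 := by
  set S := {n : ℤ | 0 ≤ n ∧ γ n ≠ -1} with hS
  obtain ⟨N, hN0, hN⟩ := exists_bound γ hfin 0
  have hne : S.Nonempty := ⟨N + 1, by omega, by rw [hN (N+1) (by omega)]; omega⟩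
  have hbdd : BddBelow S := ⟨0, fun n hn => hn.1⟩
  have heq : s0C γ = sInf S := by rw [hS]; rfl
  have hmem : s0C γ ∈ S := heq ▸ Int.csInf_mem hne hbdd
  have h0n : (0:ℤ) ∉ S := fun h => h.2 h0
  constructor
  · have := hmem.1
    rcases eq_or_lt_of_le this with h | h
    · exact absurd (h ▸ hmem) h0n
    · omega
  refine ⟨hmem.2, fun n hn hlt => ?_⟩
  by_contra h
  have h2 : sInf S ≤ n := csInf_le hbdd (⟨hn, h⟩ : n ∈ S)
  omega

lemma supZ_zero {γ : ℤ → ℤ} (hfin : (Function.support γ).Finite) {m : ℤ}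
    (h : supZ γ < m) : γ m = 0 := by
  by_contra h'
  have h2 : m ≤ sSup {n : ℤ | γ n ≠ 0} := le_csSup hfin.bddAbove h'
  have : supZ γ = sSup {n : ℤ | γ n ≠ 0} := rfl
  omega

/-- For a positive character, the sum over `[s₀, N]` equals `s₀`. -/
lemma poschar_sum {γ : ℤ → ℤ} (hp : PosChar γ) {N : ℤ} (hsN : s0C γ ≤ N + 1)
    (hN : ∀ n, N < n → γ n = 0) :
    ∑ n ∈ Finset.Ico (s0C γ) (N+1), γ n = s0C γ := by
  obtain ⟨⟨hfin, hsum⟩, hneg, h0, hpos⟩ := hp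
  obtain ⟨h1, _, hval⟩ := s0_facts hfin h0
  have htot : ∑ᶠ n, γ n = ∑ n ∈ Finset.Ico 0 (N+1), γ n := finsum_eq_sum_Ico γ N hneg hN
  rw [hsum] at htot
  rw [sum_Ico_split γ (by omega : (0:ℤ) ≤ s0C γ) hsN] at htot
  rw [sum_neg_one (by omega) hval] at htot
  omega

end Helpers

/-- Forward direction: properties of a decomposition. -/
lemma forward_lemma (γ γ0 γ1 : ℤ → ℤ) (hγ0 : PosChar γ0) (hγ1 : PosChar γ1)
    (hsup : supZ γ1 < s0C γ0) (hdec : ∀ n : ℤ, γ n = γ0 n + γ1 (n - 1)) :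
    1 ≤ s0C γ1 ∧ s0C γ1 < s0C γ0 ∧
      (∀ n : ℤ, 1 ≤ n → n ≤ s0C γ1 → γ n = -2) ∧
      (∀ n : ℤ, s0C γ1 < n → n < s0C γ0 → -1 ≤ γ n) ∧
      (∀ n : ℤ, s0C γ0 ≤ n → 0 ≤ γ n) ∧
      (∑ᶠ n ∈ {m : ℤ | s0C γ0 < m}, γ n) ≤ s0C γ0 ∧
      s0C γ0 ≤ ∑ᶠ n ∈ {m : ℤ | s0C γ0 ≤ m}, γ n := by
  set s := s0C γ0 with hs
  set t := s0C γ1 with ht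
  obtain ⟨hs1, hs2, hs3⟩ := s0_facts hγ0.1.1 hγ0.2.2.1
  obtain ⟨ht1, ht2, ht3⟩ := s0_facts hγ1.1.1 hγ1.2.2.1
  have pos0 : ∀ n : ℤ, s ≤ n → 0 ≤ γ0 n := hγ0.2.2.2
  have pos1 : ∀ n : ℤ, t ≤ n → 0 ≤ γ1 n := hγ1.2.2.2
  obtain ⟨N0, hN0c, hN0⟩ := exists_bound γ0 hγ0.1.1 (max s t)
  obtain ⟨N1, hN1c, hN1⟩ := exists_bound γ1 hγ1.1.1 (max s t)
  set N := max N0 N1 with hN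
  have hN0' : ∀ n, N < n → γ0 n = 0 := fun n hn => hN0 n (by omega)
  have hN1' : ∀ n, N < n → γ1 n = 0 := fun n hn => hN1 n (by omega)
  have hNs : s ≤ N := by simp only [hN, le_max_iff] at *; omega
  have hNt : t ≤ N := by simp only [hN, le_max_iff] at *; omega
  have hgN : ∀ n, N + 1 < n → γ n = 0 := by
    intro n hn
    rw [hdec n, hN0' n (by omega), hN1' (n-1) (by omega)]
    ring
  -- t < s
  have hts : t < s := by
    have hsum1 : ∑ n ∈ Finset.Ico t (N+1), γ1 n = t :=
      poschar_sum hγ1 (by omega) hN1'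
    have hne : ∑ n ∈ Finset.Ico t (N+1), γ1 n ≠ 0 := by omega
    obtain ⟨n, hnmem, hnne⟩ := Finset.exists_ne_zero_of_sum_ne_zero hne
    rw [Finset.mem_Ico] at hnmem
    have h2 : n ≤ sSup {m : ℤ | γ1 m ≠ 0} := le_csSup hγ1.1.1.bddAbove hnne
    have h3 : supZ γ1 = sSup {m : ℤ | γ1 m ≠ 0} := rfl
    omega
  refine ⟨ht1, hts, ?_, ?_, ?_, ?_, ?_⟩
  · intro n hn1 hn2
    have e0 : γ0 n = -1 := hs3 n (by omega) (by omega)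
    have e1 : γ1 (n-1) = -1 := ht3 (n-1) (by omega) (by omega)
    rw [hdec n, e0, e1]; ring
  · intro n hn1 hn2
    have e0 : γ0 n = -1 := hs3 n (by omega) (by omega)
    have e1 : 0 ≤ γ1 (n-1) := pos1 (n-1) (by omega)
    rw [hdec n, e0]; omega
  · intro n hn
    have e0 : 0 ≤ γ0 n := pos0 n hn
    have e1 : 0 ≤ γ1 (n-1) := pos1 (n-1) (by omega)
    rw [hdec n]; omega
  · -- sum over n > s
    rw [finsum_mem_gt γ s (N+1) hgN]
    have hcong : ∀ n ∈ Finset.Ico (s+1) (N+1+1), γ n = γ0 n := by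
      intro n hn
      rw [Finset.mem_Ico] at hn
      rw [hdec n, supZ_zero hγ1.1.1 (show supZ γ1 < n - 1 by omega)]
      ring
    rw [Finset.sum_congr rfl hcong]
    have hsplit : ∑ n ∈ Finset.Ico s (N+1+1), γ0 n
        = γ0 s + ∑ n ∈ Finset.Ico (s+1) (N+1+1), γ0 n :=
      sum_Ico_split_one γ0 (by omega)
    have hsum0 : ∑ n ∈ Finset.Ico s (N+1+1), γ0 n = s :=
      poschar_sum hγ0 (by omega) (fun n hn => hN0' n (by omega))
    have := pos0 s le_rfl
    have hb : (Finset.Ico (s+1) (N+1+1)).sum γ0 = ∑ n ∈ Finset.Ico (s+1) (N+1+1), γ0 n := rfl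
    omega
  · -- sum over n ≥ s
    rw [finsum_mem_ge γ s (N+1) hgN]
    have hcong : ∀ n ∈ Finset.Ico s (N+1+1), γ n = γ0 n + γ1 (n-1) :=
      fun n _ => hdec n
    rw [Finset.sum_congr rfl hcong, Finset.sum_add_distrib]
    have hsum0 : ∑ n ∈ Finset.Ico s (N+1+1), γ0 n = s :=
      poschar_sum hγ0 (by omega) (fun n hn => hN0' n (by omega))
    have hnn : 0 ≤ ∑ n ∈ Finset.Ico s (N+1+1), γ1 (n-1) := by
      apply Finset.sum_nonneg
      intro n hn
      rw [Finset.mem_Ico] at hn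
      exact pos1 (n-1) (by omega)
    omega

/-- Backward direction: construction of the decomposition. -/
lemma backward_lemma (γ : ℤ → ℤ) (hchar : IsChar γ) (hneg : ∀ n < 0, γ n = 0)
    (h0 : γ 0 = -1) (t s : ℤ) (ht1 : 1 ≤ t) (hts : t < s)
    (H3 : ∀ n : ℤ, 1 ≤ n → n ≤ t → γ n = -2)
    (H4 : ∀ n : ℤ, t < n → n < s → -1 ≤ γ n)
    (H5 : ∀ n : ℤ, s ≤ n → 0 ≤ γ n)
    (H6 : (∑ᶠ n ∈ {m : ℤ | s < m}, γ n) ≤ s)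
    (H7 : s ≤ ∑ᶠ n ∈ {m : ℤ | s ≤ m}, γ n) :
    ∃ γ0 γ1 : ℤ → ℤ, PosChar γ0 ∧ PosChar γ1 ∧ supZ γ1 < s0C γ0 ∧
      ∀ n : ℤ, γ n = γ0 n + γ1 (n - 1) := by
  classical
  obtain ⟨hfin, hsum⟩ := hchar
  obtain ⟨N, hNs, hN⟩ := exists_bound γ hfin s
  set Sgt := ∑ n ∈ Finset.Ico (s+1) (N+1), γ n with hSgtdef
  have H6' : Sgt ≤ s := by rwa [finsum_mem_gt γ s N hN] at H6
  have H7' : s ≤ γ s + Sgt := by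
    rwa [finsum_mem_ge γ s N hN, sum_Ico_split_one γ (by omega : s < N + 1)] at H7
  set γ0 : ℤ → ℤ := fun n => if n < 0 then 0 else if n < s then -1
    else if n = s then s - Sgt else γ n with hγ0def
  set γ1 : ℤ → ℤ := fun m => γ (m+1) - γ0 (m+1) with hγ1def
  -- facts about γ0
  have g0neg : ∀ n < 0, γ0 n = 0 := fun n hn => by simp only [hγ0def]; rw [if_pos hn]
  have g0lt : ∀ n, 0 ≤ n → n < s → γ0 n = -1 := fun n h1 h2 => by
    simp only [hγ0def]; rw [if_neg (by omega), if_pos h2]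
  have g0s : γ0 s = s - Sgt := by
    simp only [hγ0def]; rw [if_neg (by omega), if_neg (by omega)]; simp
  have g0gt : ∀ n, s < n → γ0 n = γ n := fun n hn => by
    simp only [hγ0def]; rw [if_neg (by omega), if_neg (by omega), if_neg (by omega)]
  have g00 : γ0 0 = -1 := g0lt 0 le_rfl (by omega)
  have g0bound : ∀ n, N < n → γ0 n = 0 := fun n hn => by
    rw [g0gt n (by omega), hN n hn]
  have s0γ0 : s0C γ0 = s := by
    have hmem : s ∈ {n : ℤ | 0 ≤ n ∧ γ0 n ≠ -1} := ⟨by omega, by rw [g0s]; omega⟩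
    apply le_antisymm
    · exact csInf_le ⟨0, fun n hn => hn.1⟩ hmem
    · apply le_csInf ⟨s, hmem⟩
      rintro n ⟨h1, h2⟩
      by_contra h
      exact h2 (g0lt n h1 (by omega))
  have g0fin : (Function.support γ0).Finite := by
    apply Set.Finite.subset (Set.finite_Icc 0 N)
    intro n hn
    rw [Function.mem_support] at hn
    rw [Set.mem_Icc]
    constructor
    · by_contra h; exact hn (g0neg n (by omega))
    · by_contra h; exact hn (g0bound n (by omega))
  have g0sgt : ∑ n ∈ Finset.Ico (s+1) (N+1), γ0 n = Sgt := by
    rw [hSgtdef]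
    exact Finset.sum_congr rfl (fun n hn => by
      rw [Finset.mem_Ico] at hn; exact g0gt n (by omega))
  have g0sum : ∑ᶠ n, γ0 n = 0 := by
    rw [finsum_eq_sum_Ico γ0 N g0neg g0bound,
      sum_Ico_split γ0 (by omega : (0:ℤ) ≤ s) (by omega : s ≤ N + 1),
      sum_neg_one (by omega) g0lt, sum_Ico_split_one γ0 (by omega : s < N + 1),
      g0s, g0sgt]
    ring
  have pos0 : PosChar γ0 := by
    refine ⟨⟨g0fin, g0sum⟩, g0neg, g00, ?_⟩
    rw [s0γ0]
    intro n hn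
    rcases eq_or_lt_of_le hn with h | h
    · rw [← h, g0s]; omega
    · rw [g0gt n h]; exact H5 n (by omega)
  -- facts about γ1
  have g1neg : ∀ m < 0, γ1 m = 0 := by
    intro m hm
    simp only [hγ1def]
    rcases eq_or_lt_of_le (show m ≤ -1 by omega) with h | h
    · rw [h]; norm_num [h0, g00]
    · rw [hneg (m+1) (by omega), g0neg (m+1) (by omega)]; ring
  have g1lt : ∀ m, 0 ≤ m → m < t → γ1 m = -1 := by
    intro m h1 h2
    simp only [hγ1def]
    rw [H3 (m+1) (by omega) (by omega), g0lt (m+1) (by omega) (by omega)]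
    ring
  have g1ges : ∀ m, s ≤ m → γ1 m = 0 := by
    intro m hm
    simp only [hγ1def]
    rw [g0gt (m+1) (by omega)]; ring
  have g1pos : ∀ m, t ≤ m → 0 ≤ γ1 m := by
    intro m hm
    rcases lt_trichotomy (m+1) s with h | h | h
    · have := H4 (m+1) (by omega) h
      have e := g0lt (m+1) (by omega) h
      simp only [hγ1def]; omega
    · have hms : m = s - 1 := by omega
      simp only [hγ1def]
      rw [show m + 1 = s by omega, g0s]
      omega
    · rw [g1ges m (by omega)]
  have g10 : γ1 0 = -1 := g1lt 0 le_rfl (by omega)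
  have g1bound : ∀ m, N < m → γ1 m = 0 := fun m hm => g1ges m (by omega)
  have g1fin : (Function.support γ1).Finite := by
    apply Set.Finite.subset (Set.finite_Icc 0 N)
    intro m hm
    rw [Function.mem_support] at hm
    rw [Set.mem_Icc]
    constructor
    · by_contra h; exact hm (g1neg m (by omega))
    · by_contra h; exact hm (g1bound m (by omega))
  have s0γ1 : s0C γ1 = t := by
    have hmem : t ∈ {n : ℤ | 0 ≤ n ∧ γ1 n ≠ -1} := ⟨by omega, by
      have := g1pos t le_rfl; omega⟩
    apply le_antisymm
    · exact csInf_le ⟨0, fun n hn => hn.1⟩ hmem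
    · apply le_csInf ⟨t, hmem⟩
      rintro n ⟨h1, h2⟩
      by_contra h
      exact h2 (g1lt n h1 (by omega))
  have hgtot : ∑ n ∈ Finset.Ico 0 (N+1+1), γ n = 0 := by
    rw [← finsum_eq_sum_Ico γ (N+1) hneg (fun n hn => hN n (by omega))]
    exact hsum
  have hg0tot : ∑ n ∈ Finset.Ico 0 (N+1+1), γ0 n = 0 := by
    rw [← finsum_eq_sum_Ico γ0 (N+1) g0neg (fun n hn => g0bound n (by omega))]
    exact g0sum
  have g1sum : ∑ᶠ m, γ1 m = 0 := by
    rw [finsum_eq_sum_Ico γ1 N g1neg g1bound]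
    have e1 : ∑ m ∈ Finset.Ico 0 (N+1), γ1 m
        = ∑ m ∈ Finset.Ico 0 (N+1), (γ (m+1) - γ0 (m+1)) := rfl
    rw [e1, Finset.sum_sub_distrib, sum_shift γ 0 (N+1), sum_shift γ0 0 (N+1)]
    rw [sum_Ico_split_one γ (by omega : (0:ℤ) < N+1+1)] at hgtot
    rw [sum_Ico_split_one γ0 (by omega : (0:ℤ) < N+1+1)] at hg0tot
    omega
  have pos1 : PosChar γ1 := by
    refine ⟨⟨g1fin, g1sum⟩, g1neg, g10, ?_⟩
    rw [s0γ1]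
    exact g1pos
  have hsup : supZ γ1 < s0C γ0 := by
    rw [s0γ0]
    have : supZ γ1 ≤ s - 1 := by
      apply csSup_le ⟨0, by rw [Set.mem_setOf_eq, g10]; omega⟩
      intro n hn
      rw [Set.mem_setOf_eq] at hn
      by_contra h
      exact hn (g1ges n (by omega))
    omega
  exact ⟨γ0, γ1, pos0, pos1, hsup, fun n => by
    simp only [hγ1def]
    rw [sub_add_cancel]
    ring⟩


/-- Prop. 3.10: characterization of characters of the form
`γ = γ₀ + γ₁[-1]` with `γ₀, γ₁` positive characters and `sup γ₁ < s₀(γ₀)`;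
moreover one can take `t = s₀(γ₁)` and `s = s₀(γ₀)`. -/
theorem char_on_quadric_iff (γ : ℤ → ℤ) (hchar : IsChar γ)
    (hneg : ∀ n < 0, γ n = 0) (h0 : γ 0 = -1) :
    ((∃ γ0 γ1 : ℤ → ℤ, PosChar γ0 ∧ PosChar γ1 ∧ supZ γ1 < s0C γ0 ∧
        ∀ n : ℤ, γ n = γ0 n + γ1 (n - 1)) ↔
      (∃ t s : ℤ, 1 ≤ t ∧ t < s ∧
        (∀ n : ℤ, 1 ≤ n → n ≤ t → γ n = -2) ∧
        (∀ n : ℤ, t < n → n < s → -1 ≤ γ n) ∧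
        (∀ n : ℤ, s ≤ n → 0 ≤ γ n) ∧
        (∑ᶠ n ∈ {m : ℤ | s < m}, γ n) ≤ s ∧
        s ≤ ∑ᶠ n ∈ {m : ℤ | s ≤ m}, γ n)) ∧
    (∀ γ0 γ1 : ℤ → ℤ, PosChar γ0 → PosChar γ1 → supZ γ1 < s0C γ0 →
      (∀ n : ℤ, γ n = γ0 n + γ1 (n - 1)) →
      (1 ≤ s0C γ1 ∧ s0C γ1 < s0C γ0 ∧
        (∀ n : ℤ, 1 ≤ n → n ≤ s0C γ1 → γ n = -2) ∧
        (∀ n : ℤ, s0C γ1 < n → n < s0C γ0 → -1 ≤ γ n) ∧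
        (∀ n : ℤ, s0C γ0 ≤ n → 0 ≤ γ n) ∧
        (∑ᶠ n ∈ {m : ℤ | s0C γ0 < m}, γ n) ≤ s0C γ0 ∧
        s0C γ0 ≤ ∑ᶠ n ∈ {m : ℤ | s0C γ0 ≤ m}, γ n)) := by
  constructor
  · constructor
    · rintro ⟨γ0, γ1, p0, p1, hsupp, hd⟩
      obtain ⟨a, b, c, d, e, f, g⟩ := forward_lemma γ γ0 γ1 p0 p1 hsupp hd
      exact ⟨s0C γ1, s0C γ0, a, b, c, d, e, f, g⟩
    · rintro ⟨t, s, ht1, hts, H3, H4, H5, H6, H7⟩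
      exact backward_lemma γ hchar hneg h0 t s ht1 hts H3 H4 H5 H6 H7
  · intro γ0 γ1 p0 p1 hsupp hd
    exact forward_lemma γ γ0 γ1 p0 p1 hsupp hd
end

section
/- Let r ≥ 1 be an integer and let γ_0, …, γ_r be positive characters with sup γ_i < s_0(γ_{i-1}) for all 1 ≤ i ≤ r, and set γ = γ_0 + γ_1[-1] + ⋯ + γ_r[-r]. Then inf{n ≥ r+1 : γ(n) > -(r+1)} = s_0(γ_r) + r. -/
open scoped BigOperators

section aux

variable {γ : ℤ → ℤ}

lemma posChar_A_nonempty (h : PosChar γ) : {n : ℤ | 0 ≤ n ∧ γ n ≠ -1}.Nonempty := by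
  obtain ⟨b, hb⟩ := h.1.1.bddAbove
  refine ⟨|b| + 1, by positivity, ?_⟩
  have : γ (|b| + 1) = 0 := by
    by_contra hne
    have := hb hne
    have := le_abs_self b
    omega
  simp [this]

lemma posChar_A_bdd : BddBelow {n : ℤ | 0 ≤ n ∧ γ n ≠ -1} :=
  ⟨0, fun _ hx => hx.1⟩

lemma posChar_s0_mem (h : PosChar γ) : 0 ≤ s0C γ ∧ γ (s0C γ) ≠ -1 :=
  Int.csInf_mem (posChar_A_nonempty h) posChar_A_bdd

lemma posChar_s0_pos (h : PosChar γ) : 1 ≤ s0C γ := by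
  obtain ⟨h0, hne⟩ := posChar_s0_mem h
  rcases eq_or_lt_of_le h0 with he | hl
  · exact absurd h.2.2.1 (by rw [← he] at hne; exact fun hc => hne hc)
  · omega

lemma posChar_eq_neg_one (h : PosChar γ) {n : ℤ} (h0 : 0 ≤ n) (hn : n < s0C γ) :
    γ n = -1 := by
  by_contra hne
  exact absurd (csInf_le posChar_A_bdd ⟨h0, hne⟩) (not_le.2 hn)

lemma posChar_ge_neg_one (h : PosChar γ) {n : ℤ} (h0 : 0 ≤ n) : -1 ≤ γ n := by
  rcases lt_or_ge n (s0C γ) with hl | hl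
  · rw [posChar_eq_neg_one h h0 hl]
  · linarith [h.2.2.2 n hl]

lemma posChar_s0_le_supZ (h : PosChar γ) : s0C γ ≤ supZ γ := by
  -- there is n ≥ s0C γ with γ n > 0
  set S := s0C γ with hS
  have hS1 : 1 ≤ S := posChar_s0_pos h
  set s : Finset ℤ := h.1.1.toFinset ∪ Finset.Icc 0 (S - 1) with hs
  have hsupp : Function.support γ ⊆ (s : Set ℤ) := by
    intro x hx
    simp [hs, Set.Finite.mem_toFinset, hx]
  have hsum : (0 : ℤ) = ∑ x ∈ s, γ x := by
    rw [← finsum_eq_sum_of_support_subset γ hsupp]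
    exact h.1.2.symm
  rw [← Finset.sum_filter_add_sum_filter_not s (· < S) γ] at hsum
  have hsub : Finset.Icc 0 (S - 1) ⊆ s.filter (· < S) := by
    intro x hx
    simp only [Finset.mem_Icc] at hx
    simp only [Finset.mem_filter, hs, Finset.mem_union, Finset.mem_Icc]
    exact ⟨Or.inr hx, by omega⟩
  have hzero : ∀ x ∈ s.filter (· < S), x ∉ Finset.Icc 0 (S - 1) → γ x = 0 := by
    intro x hxs hxn
    simp only [Finset.mem_Icc, not_and, not_le] at hxn
    simp only [Finset.mem_filter] at hxs
    exact h.2.1 x (by by_contra hc; push_neg at hc; omega)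
  have hc : ∀ x ∈ Finset.Icc 0 (S - 1), γ x = -1 := by
    intro x hx
    simp only [Finset.mem_Icc] at hx
    exact posChar_eq_neg_one h hx.1 (by omega)
  have hlow : ∑ x ∈ s.filter (· < S), γ x = -S := by
    rw [← Finset.sum_subset hsub hzero, Finset.sum_congr rfl hc, Finset.sum_const,
      Int.card_Icc, nsmul_eq_mul]
    omega
  have hhigh : 0 < ∑ x ∈ s.filter (fun x => ¬ x < S), γ x := by omega
  have := Finset.exists_lt_of_sum_lt (f := fun _ => (0 : ℤ))
    (g := γ) (by simpa using hhigh)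
  obtain ⟨n, hn, hpos⟩ := this
  simp only [Finset.mem_filter, not_lt] at hn
  calc S ≤ n := hn.2
    _ ≤ supZ γ := le_csSup (h.1.1.subset (fun x hx => hx)).bddAbove (by exact hpos.ne')

end aux

/-- Cor. 3.7: for `γ = γ₀ + γ₁[-1] + ⋯ + γ_r[-r]` with
positive characters `γᵢ` satisfying `sup γᵢ < s₀(γ_{i-1})`, one has
`inf {n ≥ r+1 | γ(n) > -(r+1)} = s₀(γ_r) + r`. -/
theorem s1_of_decomposition (r : ℕ) (hr : 1 ≤ r) (Γ : ℕ → ℤ → ℤ)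
    (hpos : ∀ i ≤ r, PosChar (Γ i))
    (hgap : ∀ i, 1 ≤ i → i ≤ r → supZ (Γ i) < s0C (Γ (i - 1)))
    (γ : ℤ → ℤ) (hγ : ∀ n : ℤ, γ n = ∑ i ∈ Finset.range (r + 1), Γ i (n - i)) :
    sInf {n : ℤ | (r : ℤ) + 1 ≤ n ∧ -((r : ℤ) + 1) < γ n} = s0C (Γ r) + r := by
  have hchain : ∀ d : ℕ, d ≤ r → s0C (Γ r) + d ≤ s0C (Γ (r - d)) := by
    intro d
    induction d with
    | zero => intro _; simp
    | succ d ih =>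
      intro hd
      have h1 := ih (by omega)
      have hstep : s0C (Γ (r - d)) < s0C (Γ (r - d - 1)) := by
        have hg := hgap (r - d) (by omega) (by omega)
        have hl := posChar_s0_le_supZ (hpos (r - d) (by omega))
        omega
      have he : r - (d + 1) = r - d - 1 := by omega
      rw [he]
      push_cast
      omega
  have hchain' : ∀ i ≤ r, s0C (Γ r) + ((r : ℤ) - i) ≤ s0C (Γ i) := by
    intro i hi
    have h1 := hchain (r - i) (by omega)
    have he : r - (r - i) = i := by omega
    rw [he] at h1
    omega
  set S := s0C (Γ r) with hSdef
  have hS : 1 ≤ S := posChar_s0_pos (hpos r le_rfl)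
  apply IsLeast.csInf_eq
  constructor
  · refine ⟨by omega, ?_⟩
    rw [hγ, Finset.sum_range_succ]
    have he : S + (r : ℤ) - r = S := by ring
    have hlast : 0 ≤ Γ r (S + (r : ℤ) - r) := by
      rw [he]
      exact (hpos r le_rfl).2.2.2 S (le_of_eq hSdef.symm)
    have hrest : -(r : ℤ) ≤ ∑ i ∈ Finset.range r, Γ i (S + r - i) := by
      calc -(r : ℤ) = ∑ _i ∈ Finset.range r, (-1 : ℤ) := by simp
        _ ≤ _ := by
          refine Finset.sum_le_sum (fun i hi => ?_)
          simp only [Finset.mem_range] at hi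
          have hiz : (i : ℤ) < r := by exact_mod_cast hi
          exact posChar_ge_neg_one (hpos i (by omega)) (by omega)
    omega
  · intro n hn
    obtain ⟨hn1, hn2⟩ := hn
    by_contra hc
    push_neg at hc
    have hall : ∀ i ∈ Finset.range (r + 1), Γ i (n - i) = -1 := by
      intro i hi
      simp only [Finset.mem_range] at hi
      have hi' : i ≤ r := by omega
      have hiz : (i : ℤ) ≤ r := by exact_mod_cast hi'
      refine posChar_eq_neg_one (hpos i hi') (by omega) ?_
      have := hchain' i hi'
      omega
    have heq : γ n = -((r : ℤ) + 1) := by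
      rw [hγ, Finset.sum_congr rfl hall, Finset.sum_const]
      simp
    omega
end
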